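/- arXiv:1511.06082 — 4 statements merged into one kernel-verified Lean document; each statement's English description precedes it below -/
import Mathlib

section
/- For each ν ≥ 1/2, the function q_ν(x) = I_ν(x) K_ν(x) / (1 + |ln x|) is increasing on (0, 1]. -/
open Real MeasureTheory Set Filter

/-- Modified Bessel function of the first kind `I_ν`. -/
noncomputable def besselI (ν x : ℝ) : ℝ :=
  ∑' n : ℕ, (x / 2) ^ (2 * (n : ℝ) + ν) / ((n.factorial : ℝ) * Real.Gamma ((n : ℝ) + ν + 1))

/-- Modified Bessel function of the second kind `K_ν`. -/
noncomputable def besselK (ν x : ℝ) : ℝ :=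
  ∫ t in Ioi (0 : ℝ), Real.exp (-x * Real.cosh t) * Real.cosh (ν * t)

/-- Bessel function of the first kind `J_ν`. -/
noncomputable def besselJ (ν x : ℝ) : ℝ :=
  ∑' n : ℕ, (-1 : ℝ) ^ n * (x / 2) ^ (2 * (n : ℝ) + ν) /
    ((n.factorial : ℝ) * Real.Gamma ((n : ℝ) + ν + 1))

/-- Modified Struve function of the first kind `L_ν`. -/
noncomputable def struveL (ν x : ℝ) : ℝ :=
  ∑' n : ℕ, (x / 2) ^ (2 * (n : ℝ) + ν + 1) /
    (Real.Gamma ((n : ℝ) + 3 / 2) * Real.Gamma ((n : ℝ) + ν + 3 / 2))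

/-- Airy function `Ai`. -/
noncomputable def airyAi (t : ℝ) : ℝ :=
  (1 / Real.pi) * ∫ s in Ioi (0 : ℝ), Real.cos (s ^ 3 / 3 + s * t)

/-- Landau constant `b_L = 2^{1/3} ⬝ sup_{t ≥ 0} Ai(t)`. -/
noncomputable def landau_bL : ℝ :=
  (2 : ℝ) ^ ((1 : ℝ) / 3) * sSup (airyAi '' Ici 0)

/-- Landau constant `c_L = sup_{t ≥ 0} t^{1/3} J₀(t)`. -/
noncomputable def landau_cL : ℝ :=
  sSup ((fun t : ℝ => t ^ ((1 : ℝ) / 3) * besselJ 0 t) '' Ici 0)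

lemma quad_le_cosh (t : ℝ) : t ^ 2 / 4 ≤ Real.cosh t := by
  rw [← Real.cosh_abs]
  have h0 : 0 ≤ |t| := abs_nonneg t
  have h1 : 1 + |t| + |t| ^ 2 / 2 ≤ Real.exp |t| := Real.quadratic_le_exp_of_nonneg h0
  have h2 : 0 < Real.exp (-|t|) := Real.exp_pos _
  rw [Real.cosh_eq]
  have : t ^ 2 = |t| ^ 2 := (sq_abs t).symm
  nlinarith [Real.exp_pos (-|t|)]

lemma integrable_gauss (b a : ℝ) (hb : 0 < b) :
    Integrable (fun t : ℝ => Real.exp (-b * t ^ 2 + a * t)) := by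
  have h : (fun t : ℝ => Real.exp (-b * t ^ 2 + a * t)) =
      fun t => Real.exp (a ^ 2 / (4 * b)) * Real.exp (-b * (t - a / (2 * b)) ^ 2) := by
    funext t
    rw [← Real.exp_add]
    congr 1
    field_simp
    ring
  rw [h]
  exact ((integrable_exp_neg_mul_sq hb).comp_sub_right _).const_mul _

lemma tendsto_gauss (b a : ℝ) (hb : 0 < b) :
    Tendsto (fun t : ℝ => Real.exp (-b * t ^ 2 + a * t)) atTop (nhds 0) := by
  apply Real.tendsto_exp_atBot.comp
  have h : (fun t : ℝ => -b * t ^ 2 + a * t) = fun t => t * (a - b * t) := by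
    funext t; ring
  rw [h]
  have h2 : Tendsto (fun t : ℝ => a - b * t) atTop atBot := by
    apply tendsto_atBot_add_const_left
    exact tendsto_neg_atBot_iff.mpr ((tendsto_const_mul_atTop_of_pos hb).mpr tendsto_id)
  exact tendsto_id.atTop_mul_atBot₀ h2

lemma norm_bound_gauss {x a : ℝ} (hx : 0 < x) {F : ℝ → ℝ} {t : ℝ} (ht : 0 ≤ t)
    (hFb : |F t| ≤ Real.exp (a * t)) :
    ‖Real.exp (-x * Real.cosh t) * F t‖ ≤ Real.exp (-(x / 4) * t ^ 2 + a * t) := by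
  rw [norm_mul, Real.norm_eq_abs, Real.norm_eq_abs, Real.abs_exp]
  have h1 : Real.exp (-x * Real.cosh t) ≤ Real.exp (-(x / 4) * t ^ 2) := by
    apply Real.exp_le_exp.mpr
    nlinarith [quad_le_cosh t]
  calc Real.exp (-x * Real.cosh t) * |F t| ≤ Real.exp (-(x / 4) * t ^ 2) * Real.exp (a * t) :=
        mul_le_mul h1 hFb (abs_nonneg _) (Real.exp_pos _).le
    _ = Real.exp (-(x / 4) * t ^ 2 + a * t) := (Real.exp_add _ _).symm

lemma integrableOn_exp_cosh_mul {x : ℝ} (hx : 0 < x) {F : ℝ → ℝ} (hF : Continuous F) {a : ℝ}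
    (hFb : ∀ t, 0 ≤ t → |F t| ≤ Real.exp (a * t)) :
    IntegrableOn (fun t => Real.exp (-x * Real.cosh t) * F t) (Ioi (0 : ℝ)) := by
  apply Integrable.mono' ((integrable_gauss (x / 4) a (by positivity)).integrableOn)
  · exact ((Real.continuous_exp.comp ((continuous_const.mul Real.continuous_cosh))).mul
      hF).aestronglyMeasurable.restrict
  · filter_upwards [ae_restrict_mem measurableSet_Ioi] with t ht
    exact norm_bound_gauss hx (le_of_lt ht) (hFb t (le_of_lt ht))

lemma abs_cosh_le (y : ℝ) : |Real.cosh y| ≤ Real.exp |y| := by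
  rw [abs_of_pos (Real.cosh_pos y), ← Real.cosh_abs, Real.cosh_eq]
  nlinarith [Real.exp_pos (-|y|), Real.exp_pos (|y|), Real.exp_le_exp.mpr (neg_abs_le y),
    Real.exp_le_exp.mpr (le_abs_self y)]

lemma abs_sinh_le (y : ℝ) : |Real.sinh y| ≤ Real.exp |y| := by
  rw [Real.abs_sinh]
  calc Real.sinh |y| ≤ Real.cosh |y| := (Real.sinh_lt_cosh _).le
    _ ≤ Real.exp |y| := by
        have := abs_cosh_le y
        rwa [abs_of_pos (Real.cosh_pos y), ← Real.cosh_abs] at this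

lemma integrableOn_K (μ x : ℝ) (hx : 0 < x) :
    IntegrableOn (fun t => Real.exp (-x * Real.cosh t) * Real.cosh (μ * t)) (Ioi (0 : ℝ)) := by
  apply integrableOn_exp_cosh_mul hx (Real.continuous_cosh.comp (continuous_const.mul continuous_id))
  intro t ht
  calc |Real.cosh (μ * t)| ≤ Real.exp |μ * t| := abs_cosh_le _
    _ = Real.exp (|μ| * t) := by rw [abs_mul, abs_of_nonneg ht]

lemma integrableOn_K_cosh (μ x : ℝ) (hx : 0 < x) :
    IntegrableOn (fun t => Real.exp (-x * Real.cosh t) * (Real.cosh t * Real.cosh (μ * t)))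
      (Ioi (0 : ℝ)) := by
  apply integrableOn_exp_cosh_mul hx
    (Real.continuous_cosh.mul (Real.continuous_cosh.comp (continuous_const.mul continuous_id)))
  intro t ht
  calc |Real.cosh t * Real.cosh (μ * t)| = |Real.cosh t| * |Real.cosh (μ * t)| := abs_mul _ _
    _ ≤ Real.exp |t| * Real.exp |μ * t| :=
        mul_le_mul (abs_cosh_le _) (abs_cosh_le _) (abs_nonneg _) (Real.exp_pos _).le
    _ = Real.exp ((1 + |μ|) * t) := by
        rw [← Real.exp_add, abs_mul, abs_of_nonneg ht]; ring_nf

lemma integrableOn_K_sinh (μ x : ℝ) (hx : 0 < x) :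
    IntegrableOn (fun t => Real.exp (-x * Real.cosh t) * (Real.sinh t * Real.sinh (μ * t)))
      (Ioi (0 : ℝ)) := by
  apply integrableOn_exp_cosh_mul hx
    (Real.continuous_sinh.mul (Real.continuous_sinh.comp (continuous_const.mul continuous_id)))
  intro t ht
  calc |Real.sinh t * Real.sinh (μ * t)| = |Real.sinh t| * |Real.sinh (μ * t)| := abs_mul _ _
    _ ≤ Real.exp |t| * Real.exp |μ * t| :=
        mul_le_mul (abs_sinh_le _) (abs_sinh_le _) (abs_nonneg _) (Real.exp_pos _).le
    _ = Real.exp ((1 + |μ|) * t) := by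
        rw [← Real.exp_add, abs_mul, abs_of_nonneg ht]; ring_nf

lemma tendsto_boundary (ν x : ℝ) (hx : 0 < x) :
    Tendsto (fun t => Real.exp (-x * Real.cosh t) * Real.sinh (ν * t)) atTop (nhds 0) := by
  apply squeeze_zero_norm' ?_ (tendsto_gauss (x / 4) |ν| (by positivity))
  filter_upwards [eventually_ge_atTop (0 : ℝ)] with t ht
  apply norm_bound_gauss hx ht
  calc |Real.sinh (ν * t)| ≤ Real.exp |ν * t| := abs_sinh_le _
    _ = Real.exp (|ν| * t) := by rw [abs_mul, abs_of_nonneg ht]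

lemma hasDerivAt_exp_cosh (x t : ℝ) :
    HasDerivAt (fun t => Real.exp (-x * Real.cosh t)) (-x * Real.sinh t * Real.exp (-x * Real.cosh t)) t := by
  have h : HasDerivAt (fun t => -x * Real.cosh t) (-x * Real.sinh t) t :=
    (Real.hasDerivAt_cosh t).const_mul (-x)
  simpa [mul_comm] using h.exp

lemma K_rec (ν x : ℝ) (hx : 0 < x) :
    ∫ t in Ioi (0 : ℝ), Real.exp (-x * Real.cosh t) * (Real.sinh t * Real.sinh (ν * t)) =
      (ν / x) * ∫ t in Ioi (0 : ℝ), Real.exp (-x * Real.cosh t) * Real.cosh (ν * t) := by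
  set F : ℝ → ℝ := fun t => -(1 / x) * (Real.exp (-x * Real.cosh t) * Real.sinh (ν * t)) with hF
  set G : ℝ → ℝ := fun t => Real.exp (-x * Real.cosh t) * (Real.sinh t * Real.sinh (ν * t)) -
      (ν / x) * (Real.exp (-x * Real.cosh t) * Real.cosh (ν * t)) with hG
  have hderiv : ∀ t ∈ Ici (0 : ℝ), HasDerivAt F (G t) t := by
    intro t _
    have h1 : HasDerivAt (fun t => Real.sinh (ν * t)) (Real.cosh (ν * t) * ν) t := by
      simpa using ((hasDerivAt_id t).const_mul ν).sinh
    have h2 := ((hasDerivAt_exp_cosh x t).mul h1).const_mul (-(1 / x))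
    refine h2.congr_deriv ?_
    simp only [hG]
    field_simp
    ring
  have hint : IntegrableOn G (Ioi (0 : ℝ)) :=
    (integrableOn_K_sinh ν x hx).sub ((integrableOn_K ν x hx).const_mul _)
  have htend : Tendsto F atTop (nhds 0) := by
    have := (tendsto_boundary ν x hx).const_mul (-(1 / x))
    rw [mul_zero] at this
    exact this
  have h0 : ∫ t in Ioi (0 : ℝ), G t = 0 - F 0 := by
    exact integral_Ioi_of_hasDerivAt_of_tendsto' hderiv hint htend
  have hF0 : F 0 = 0 := by simp [hF]
  rw [hF0, sub_zero] at h0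
  have := integral_sub (integrableOn_K_sinh ν x hx) ((integrableOn_K ν x hx).const_mul (ν / x))
  rw [hG] at h0
  rw [integral_sub (integrableOn_K_sinh ν x hx)
    ((integrableOn_K ν x hx).const_mul (ν / x)), sub_eq_zero] at h0
  rw [h0, MeasureTheory.integral_const_mul]

lemma K_hasDerivAt (ν x : ℝ) (hx : 0 < x) :
    HasDerivAt (besselK ν)
      (-∫ t in Ioi (0 : ℝ), Real.exp (-x * Real.cosh t) * (Real.cosh t * Real.cosh (ν * t))) x := by
  set F' : ℝ → ℝ → ℝ := fun y t => -(Real.exp (-y * Real.cosh t) * (Real.cosh t * Real.cosh (ν * t)))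
    with hF'def
  have key := hasDerivAt_integral_of_dominated_loc_of_deriv_le (μ := volume.restrict (Ioi (0:ℝ)))
    (F := fun y t => Real.exp (-y * Real.cosh t) * Real.cosh (ν * t)) (F' := F')
    (x₀ := x) (s := Metric.ball x (x / 2)) (Metric.ball_mem_nhds x (by positivity))
    (bound := fun t => Real.exp (-(x / 2) * Real.cosh t) * (Real.cosh t * Real.cosh (ν * t)))
    ?_ ?_ ?_ ?_ ?_ ?_
  · have h2 := key.2
    rwa [MeasureTheory.integral_neg] at h2
  · filter_upwards with y
    exact ((Real.continuous_exp.comp (continuous_const.mul Real.continuous_cosh)).mul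
      (Real.continuous_cosh.comp (continuous_const.mul continuous_id))).aestronglyMeasurable.restrict
  · exact integrableOn_K ν x hx
  · exact (((Real.continuous_exp.comp (continuous_const.mul Real.continuous_cosh)).mul
      ((Real.continuous_cosh.mul
        (Real.continuous_cosh.comp (continuous_const.mul continuous_id))))).neg).aestronglyMeasurable.restrict
  · filter_upwards [ae_restrict_mem measurableSet_Ioi] with t ht y hy
    rw [Metric.mem_ball, Real.dist_eq, abs_lt] at hy
    have hy2 : x / 2 < y := by linarith [hy.1]
    have hc : (0:ℝ) < Real.cosh t := Real.cosh_pos t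
    have hcc : 0 ≤ Real.cosh t * Real.cosh (ν * t) := le_of_lt (mul_pos hc (Real.cosh_pos _))
    rw [hF'def]
    simp only [norm_neg, norm_mul, Real.norm_eq_abs, Real.abs_exp]
    rw [abs_of_pos hc, abs_of_pos (Real.cosh_pos (ν * t))]
    apply mul_le_mul_of_nonneg_right _ hcc
    apply Real.exp_le_exp.mpr
    nlinarith
  · exact integrableOn_K_cosh ν (x / 2) (by positivity)
  · filter_upwards with t y hy
    have h1 : HasDerivAt (fun y : ℝ => -y * Real.cosh t) (-Real.cosh t) y := by
      simpa using ((hasDerivAt_id y).neg.mul_const (Real.cosh t))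
    have h2 := (h1.exp).mul_const (Real.cosh (ν * t))
    refine h2.congr_deriv ?_
    rw [hF'def]
    ring

lemma cosh_id1 (ν t : ℝ) :
    Real.cosh t * Real.cosh (ν * t) =
      Real.cosh ((ν + 1) * t) / 2 + Real.cosh ((ν - 1) * t) / 2 := by
  have h1 : (ν + 1) * t = ν * t + t := by ring
  have h2 : (ν - 1) * t = ν * t - t := by ring
  rw [h1, h2, Real.cosh_add, Real.cosh_sub]
  ring

lemma cosh_id2 (ν t : ℝ) :
    Real.cosh ((ν + 1) * t) - Real.cosh ((ν - 1) * t) =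
      2 * (Real.sinh t * Real.sinh (ν * t)) := by
  have h1 : (ν + 1) * t = ν * t + t := by ring
  have h2 : (ν - 1) * t = ν * t - t := by ring
  rw [h1, h2, Real.cosh_add, Real.cosh_sub]
  ring

lemma K_diff (ν x : ℝ) (hx : 0 < x) :
    besselK (ν + 1) x - besselK (ν - 1) x = (2 * ν / x) * besselK ν x := by
  unfold besselK
  rw [← MeasureTheory.integral_sub (integrableOn_K (ν + 1) x hx) (integrableOn_K (ν - 1) x hx)]
  have : ∀ t : ℝ, Real.exp (-x * Real.cosh t) * Real.cosh ((ν + 1) * t) -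
      Real.exp (-x * Real.cosh t) * Real.cosh ((ν - 1) * t) =
      2 * (Real.exp (-x * Real.cosh t) * (Real.sinh t * Real.sinh (ν * t))) := by
    intro t
    rw [← mul_sub, cosh_id2]
    ring
  simp_rw [this]
  rw [MeasureTheory.integral_const_mul, K_rec ν x hx]
  ring

lemma K_hasDerivAt' (ν x : ℝ) (hx : 0 < x) :
    HasDerivAt (besselK ν) (-(besselK (ν - 1) x) - (ν / x) * besselK ν x) x := by
  have h := K_hasDerivAt ν x hx
  have heq : ∫ t in Ioi (0 : ℝ), Real.exp (-x * Real.cosh t) * (Real.cosh t * Real.cosh (ν * t)) =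
      besselK (ν + 1) x / 2 + besselK (ν - 1) x / 2 := by
    have : ∀ t : ℝ, Real.exp (-x * Real.cosh t) * (Real.cosh t * Real.cosh (ν * t)) =
        Real.exp (-x * Real.cosh t) * Real.cosh ((ν + 1) * t) / 2 +
        Real.exp (-x * Real.cosh t) * Real.cosh ((ν - 1) * t) / 2 := by
      intro t; rw [cosh_id1]; ring
    simp_rw [this]
    rw [MeasureTheory.integral_add ((integrableOn_K (ν + 1) x hx).div_const 2)
      ((integrableOn_K (ν - 1) x hx).div_const 2),
      MeasureTheory.integral_div, MeasureTheory.integral_div]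
    rfl
  rw [heq] at h
  have h2 : besselK (ν + 1) x = besselK (ν - 1) x + (2 * ν / x) * besselK ν x := by
    have := K_diff ν x hx; linarith
  convert h using 1
  rw [h2]
  field_simp
  ring

lemma K_nonneg (ν x : ℝ) : 0 ≤ besselK ν x := by
  apply MeasureTheory.setIntegral_nonneg measurableSet_Ioi
  intro t _
  positivity

lemma K_order_mono {ν : ℝ} (hν : 1 / 2 ≤ ν) (x : ℝ) (hx : 0 < x) :
    besselK (ν - 1) x ≤ besselK ν x := by
  apply MeasureTheory.setIntegral_mono_on (integrableOn_K (ν - 1) x hx)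
    (integrableOn_K ν x hx) measurableSet_Ioi
  intro t ht
  apply mul_le_mul_of_nonneg_left _ (Real.exp_pos _).le
  apply Real.cosh_le_cosh.mpr
  rw [abs_mul, abs_mul, abs_of_pos (show (0:ℝ) < t from ht)]
  apply mul_le_mul_of_nonneg_right _ (le_of_lt ht)
  rw [abs_of_nonneg (by linarith : (0:ℝ) ≤ ν)]
  rw [abs_le]
  constructor <;> linarith

lemma g_hasDerivAt (ν x : ℝ) (hx : 0 < x) :
    HasDerivAt (fun x : ℝ => x ^ ν * Real.exp x * besselK ν x)
      (x ^ ν * Real.exp x * (besselK ν x - besselK (ν - 1) x)) x := by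
  have h1 : HasDerivAt (fun x : ℝ => x ^ ν) (ν * x ^ (ν - 1)) x :=
    Real.hasDerivAt_rpow_const (Or.inl hx.ne')
  have h2 : HasDerivAt (fun x : ℝ => x ^ ν * Real.exp x * besselK ν x) _ x :=
    (h1.mul (Real.hasDerivAt_exp x)).mul (K_hasDerivAt' ν x hx)
  convert h2 using 1
  have hsub : x ^ (ν - 1) = x ^ ν / x := by
    rw [Real.rpow_sub hx, Real.rpow_one]
  rw [hsub]
  simp only [Pi.mul_apply]
  field_simp
  ring

lemma g_monotoneOn {ν : ℝ} (hν : 1 / 2 ≤ ν) :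
    MonotoneOn (fun x : ℝ => x ^ ν * Real.exp x * besselK ν x) (Ioc (0:ℝ) 1) := by
  apply monotoneOn_of_deriv_nonneg (convex_Ioc 0 1)
  · intro x hx
    exact (g_hasDerivAt ν x hx.1).continuousAt.continuousWithinAt
  · rw [interior_Ioc]
    intro x hx
    exact (g_hasDerivAt ν x hx.1).differentiableAt.differentiableWithinAt
  · rw [interior_Ioc]
    intro x hx
    rw [(g_hasDerivAt ν x hx.1).deriv]
    have h1 : (0:ℝ) ≤ x ^ ν := (Real.rpow_pos_of_pos hx.1 ν).le
    have h2 := K_order_mono hν x hx.1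
    have h3 := (Real.exp_pos x).le
    have h4 : 0 ≤ besselK ν x - besselK (ν - 1) x := by linarith
    positivity

lemma g_nonneg (ν x : ℝ) (hx : 0 < x) : 0 ≤ x ^ ν * Real.exp x * besselK ν x := by
  have := K_nonneg ν x
  have h1 : (0:ℝ) ≤ x ^ ν := (Real.rpow_pos_of_pos hx ν).le
  positivity

lemma h_monotoneOn : MonotoneOn (fun x : ℝ => Real.exp (-x) / (1 - Real.log x)) (Ioc (0:ℝ) 1) := by
  have hden : ∀ x : ℝ, x ∈ Ioc (0:ℝ) 1 → 0 < 1 - Real.log x := by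
    intro x hx
    have := Real.log_nonpos hx.1.le hx.2
    linarith
  apply monotoneOn_of_deriv_nonneg (convex_Ioc 0 1)
  · apply ContinuousOn.div
    · exact (Real.continuous_exp.comp continuous_neg).continuousOn
    · exact continuousOn_const.sub (Real.continuousOn_log.mono (fun x hx => ne_of_gt hx.1))
    · intro x hx; exact (hden x hx).ne'
  all_goals rw [interior_Ioc]
  · intro x hx
    have h1 : HasDerivAt (fun x : ℝ => Real.exp (-x)) (-Real.exp (-x)) x := by
      simpa using (hasDerivAt_neg x).exp
    have h2 : HasDerivAt (fun x : ℝ => 1 - Real.log x) (-(1/x)) x := by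
      simpa using (Real.hasDerivAt_log (ne_of_gt hx.1)).const_sub 1
    exact ((h1.div h2 (hden x (Ioo_subset_Ioc_self hx)).ne')).differentiableAt.differentiableWithinAt
  · intro x hx
    have hxm := Ioo_subset_Ioc_self hx
    have h1 : HasDerivAt (fun x : ℝ => Real.exp (-x)) (-Real.exp (-x)) x := by
      simpa using (hasDerivAt_neg x).exp
    have h2 : HasDerivAt (fun x : ℝ => 1 - Real.log x) (-(1/x)) x := by
      simpa using (Real.hasDerivAt_log (ne_of_gt hx.1)).const_sub 1
    rw [HasDerivAt.deriv (f := fun x : ℝ => Real.exp (-x) / (1 - Real.log x)) (h1.div h2 (hden x hxm).ne')]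
    have hlog : 1 - 1 / x ≤ Real.log x := by
      have := Real.log_le_sub_one_of_pos (by have := hx.1; positivity : (0:ℝ) < 1 / x)
      rw [Real.log_div one_ne_zero (ne_of_gt hx.1), Real.log_one] at this
      linarith
    apply div_nonneg _ (sq_nonneg _)
    have hex := (Real.exp_pos (-x)).le
    have : -Real.exp (-x) * (1 - Real.log x) - Real.exp (-x) * -(1/x) =
        Real.exp (-x) * (1/x - 1 + Real.log x) := by ring
    rw [this]
    apply mul_nonneg hex
    linarith

noncomputable def Icoef (ν : ℝ) (n : ℕ) : ℝ :=
  ((2:ℝ) ^ (2 * (n:ℝ) + ν) * ((n.factorial : ℝ) * Real.Gamma ((n:ℝ) + ν + 1)))⁻¹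

lemma Icoef_pos {ν : ℝ} (hν : 1 / 2 ≤ ν) (n : ℕ) : 0 < Icoef ν n := by
  have h1 : (0:ℝ) < (2:ℝ) ^ (2 * (n:ℝ) + ν) := Real.rpow_pos_of_pos two_pos _
  have h2 : (0:ℝ) < (n.factorial : ℝ) := Nat.cast_pos.mpr n.factorial_pos
  have h3 : (0:ℝ) < Real.Gamma ((n:ℝ) + ν + 1) := by
    apply Real.Gamma_pos_of_pos
    have : (0:ℝ) ≤ (n:ℝ) := Nat.cast_nonneg n
    linarith
  unfold Icoef
  positivity

lemma Icoef_ratio {ν : ℝ} (hν : 1 / 2 ≤ ν) (n : ℕ) :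
    Icoef ν (n + 1) = Icoef ν n / (4 * ((n:ℕ) + 1) * ((n:ℝ) + ν + 1)) := by
  have hpos : (0:ℝ) < (n:ℝ) + ν + 1 := by
    have : (0:ℝ) ≤ (n:ℝ) := Nat.cast_nonneg n
    linarith
  unfold Icoef
  have e1 : (2:ℝ) ^ (2 * ((n:ℕ) + 1 : ℝ) + ν) = (2:ℝ) ^ (2 * (n:ℝ) + ν) * 4 := by
    rw [show 2 * ((n:ℕ) + 1 : ℝ) + ν = (2 * (n:ℝ) + ν) + 2 by push_cast; ring,
      Real.rpow_add two_pos]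
    norm_num
  have e2 : ((n + 1).factorial : ℝ) = ((n:ℕ) + 1 : ℝ) * (n.factorial : ℝ) := by
    rw [Nat.factorial_succ]; push_cast; ring
  have e3 : Real.Gamma (((n:ℕ) + 1 : ℝ) + ν + 1) = ((n:ℝ) + ν + 1) * Real.Gamma ((n:ℝ) + ν + 1) := by
    rw [show ((n:ℕ) + 1 : ℝ) + ν + 1 = ((n:ℝ) + ν + 1) + 1 by push_cast; ring,
      Real.Gamma_add_one hpos.ne']
  push_cast
  push_cast at e1 e2 e3
  rw [e1, e2, e3]
  have hf : (0:ℝ) < (n.factorial : ℝ) := Nat.cast_pos.mpr n.factorial_pos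
  have hg : (0:ℝ) < Real.Gamma ((n:ℝ) + ν + 1) := Real.Gamma_pos_of_pos (by linarith)
  have h2 : (0:ℝ) < (2:ℝ) ^ (2 * (n:ℝ) + ν) := Real.rpow_pos_of_pos two_pos _
  field_simp

lemma Iser_summable {ν : ℝ} (hν : 1 / 2 ≤ ν) {x : ℝ} (hx : 0 < x) :
    Summable (fun n : ℕ => x ^ (2 * (n:ℝ)) * Icoef ν n) := by
  set f : ℕ → ℝ := fun n => x ^ (2 * (n:ℝ)) * Icoef ν n with hf
  have hfpos : ∀ n, 0 < f n := fun n =>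
    mul_pos (Real.rpow_pos_of_pos hx _) (Icoef_pos hν n)
  apply summable_of_ratio_test_tendsto_lt_one (l := 0) one_pos
    (Eventually.of_forall fun n => (hfpos n).ne')
  have hratio : ∀ n : ℕ, ‖f (n + 1)‖ / ‖f n‖ =
      x ^ (2:ℝ) / (4 * ((n:ℝ) + 1) * ((n:ℝ) + ν + 1)) := by
    intro n
    have hxe : x ^ (2 * ((n:ℕ) + 1 : ℝ)) = x ^ (2 * (n:ℝ)) * x ^ (2:ℝ) := by
      rw [← Real.rpow_add hx]; norm_num; ring_nf
    rw [Real.norm_eq_abs, Real.norm_eq_abs, abs_of_pos (hfpos _), abs_of_pos (hfpos _), hf]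
    simp only []
    push_cast
    push_cast at hxe
    rw [hxe, Icoef_ratio hν n]
    have h1 : (0:ℝ) < x ^ (2 * (n:ℝ)) := Real.rpow_pos_of_pos hx _
    have h2 := Icoef_pos hν n
    have h3 : (0:ℝ) < (n:ℝ) + ν + 1 := by
      have : (0:ℝ) ≤ (n:ℝ) := Nat.cast_nonneg n
      linarith
    push_cast
    field_simp
  simp_rw [hratio]
  have hb : Tendsto (fun n : ℕ => x ^ (2:ℝ) * (1 / ((n:ℝ) + 1))) atTop (nhds 0) := by
    have := tendsto_one_div_add_atTop_nhds_zero_nat.const_mul (x ^ (2:ℝ))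
    simpa using this
  apply squeeze_zero (fun n => by positivity) _ hb
  intro n
  rw [div_le_iff₀ (by positivity)]
  have h3 : (1:ℝ) ≤ (n:ℝ) + ν + 1 := by
    have : (0:ℝ) ≤ (n:ℝ) := Nat.cast_nonneg n
    linarith
  have h4 : (0:ℝ) < (n:ℝ) + 1 := by positivity
  have h5 : (0:ℝ) ≤ x ^ (2:ℝ) := (Real.rpow_pos_of_pos hx _).le
  have expand : x ^ (2:ℝ) * (1 / ((n:ℝ) + 1)) * (4 * ((n:ℝ) + 1) * ((n:ℝ) + ν + 1)) =
      x ^ (2:ℝ) * (4 * ((n:ℝ) + ν + 1)) := by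
    field_simp
  rw [expand]
  nlinarith [mul_le_mul_of_nonneg_left (show (1:ℝ) ≤ 4 * ((n:ℝ) + ν + 1) by linarith) h5]

noncomputable def Iser (ν x : ℝ) : ℝ := ∑' n : ℕ, x ^ (2 * (n:ℝ)) * Icoef ν n

lemma Iser_nonneg {ν : ℝ} (hν : 1 / 2 ≤ ν) (x : ℝ) : 0 ≤ Iser ν x := by
  apply tsum_nonneg
  intro n
  have h1 := (Icoef_pos hν n).le
  have h2 : (0:ℝ) ≤ x ^ (2 * (n:ℝ)) := by
    rw [show (2 * (n:ℝ)) = ((2 * n : ℕ) : ℝ) by push_cast; ring, Real.rpow_natCast]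
    exact (even_two_mul n).pow_nonneg x
  exact mul_nonneg h2 h1

lemma Iser_monotoneOn {ν : ℝ} (hν : 1 / 2 ≤ ν) :
    MonotoneOn (Iser ν) (Ioc (0:ℝ) 1) := by
  intro x hx y hy hxy
  apply Summable.tsum_le_tsum _ (Iser_summable hν hx.1) (Iser_summable hν (hx.1.trans_le hxy))
  intro n
  apply mul_le_mul_of_nonneg_right _ (Icoef_pos hν n).le
  exact Real.rpow_le_rpow hx.1.le hxy (by positivity)

lemma besselI_eq {ν : ℝ} (x : ℝ) (hx : 0 < x) : besselI ν x = x ^ ν * Iser ν x := by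
  unfold besselI Iser
  rw [← tsum_mul_left]
  congr 1
  funext n
  rw [Real.div_rpow hx.le (by norm_num : (0:ℝ) ≤ 2)]
  rw [show (2 * (n:ℝ) + ν) = ν + 2 * (n:ℝ) by ring, Real.rpow_add hx]
  unfold Icoef
  rw [show ν + 2 * (n:ℝ) = 2 * (n:ℝ) + ν by ring]
  have h2 : (0:ℝ) < (2:ℝ) ^ (2 * (n:ℝ) + ν) := Real.rpow_pos_of_pos two_pos _
  field_simp

lemma monoOn_mul {f g : ℝ → ℝ} {s : Set ℝ} (hf : MonotoneOn f s) (hg : MonotoneOn g s)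
    (hf0 : ∀ x ∈ s, 0 ≤ f x) (hg0 : ∀ x ∈ s, 0 ≤ g x) :
    MonotoneOn (fun x => f x * g x) s := fun a ha b hb hab =>
  mul_le_mul (hf ha hb hab) (hg ha hb hab) (hg0 a ha) ((hf0 a ha).trans (hf ha hb hab))

theorem stmt11 (ν : ℝ) (hν : 1 / 2 ≤ ν) :
    MonotoneOn (fun x : ℝ => besselI ν x * besselK ν x / (1 + |Real.log x|)) (Ioc 0 1) := by
  have hIg : MonotoneOn (fun x : ℝ => Iser ν x * (x ^ ν * Real.exp x * besselK ν x))
      (Ioc (0:ℝ) 1) :=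
    monoOn_mul (Iser_monotoneOn hν) (g_monotoneOn hν)
      (fun x _ => Iser_nonneg hν x) (fun x hx => g_nonneg ν x hx.1)
  have hP : MonotoneOn (fun x : ℝ =>
      (Iser ν x * (x ^ ν * Real.exp x * besselK ν x)) * (Real.exp (-x) / (1 - Real.log x)))
      (Ioc (0:ℝ) 1) := by
    apply monoOn_mul hIg h_monotoneOn
    · intro x hx
      exact mul_nonneg (Iser_nonneg hν x) (g_nonneg ν x hx.1)
    · intro x hx
      have := Real.log_nonpos hx.1.le hx.2
      have h1 : (0:ℝ) < 1 - Real.log x := by linarith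
      positivity
  have heq : ∀ x ∈ Ioc (0:ℝ) 1,
      (Iser ν x * (x ^ ν * Real.exp x * besselK ν x)) * (Real.exp (-x) / (1 - Real.log x)) =
      besselI ν x * besselK ν x / (1 + |Real.log x|) := by
    intro x hx
    have hlog := Real.log_nonpos hx.1.le hx.2
    rw [abs_of_nonpos hlog, besselI_eq x hx.1, Real.exp_neg]
    have h1 : (0:ℝ) < Real.exp x := Real.exp_pos x
    have h2 : (0:ℝ) < 1 - Real.log x := by linarith
    have h3 : (1:ℝ) + -Real.log x = 1 - Real.log x := by ring
    rw [h3]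
    field_simp [h1.ne', h2.ne']
  intro a ha b hb hab
  have h := hP ha hb hab
  simp only at h ⊢
  rw [← heq a ha, ← heq b hb]
  exact h
end

section
/- For each fixed x > 0, the function ν ↦ 𝒫_ν(x) = (√π Γ(ν + 1/2) / (2 x^ν)) I_ν(x) K_ν(x) is strictly log-convex on (-1/2, ∞). -/
open Real MeasureTheory Set Filter

namespace Aux14


/-- quadratic lower bound for cosh -/
lemma sq_le_cosh (t : ℝ) (ht : 0 ≤ t) : (1 + t/2)^2/2 ≤ Real.cosh t := by
  have h1 : t/2 + 1 ≤ Real.exp (t/2) := Real.add_one_le_exp _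
  have h2 : (1 + t/2)^2 ≤ Real.exp t := by
    have : Real.exp (t/2) ^ 2 = Real.exp t := by
      rw [← Real.exp_nat_mul]; ring_nf
    nlinarith [Real.exp_pos (t/2)]
  rw [Real.cosh_eq]
  nlinarith [Real.exp_pos (-t)]

/-- the dominating integrable function -/
lemma integrableOn_exp_cosh (x c : ℝ) (hx : 0 < x) :
    IntegrableOn (fun t => Real.exp (-x * Real.cosh t) * Real.exp (c * t)) (Ioi (0:ℝ)) := by
  set d : ℝ := (4*c - 2*x)/x with hd
  set e : ℝ := x/8*d^2 - x/2 with he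
  have hint : Integrable (fun t : ℝ => Real.exp e * Real.exp (-(x/8) * (t - d)^2)) volume :=
    ((integrable_exp_neg_mul_sq (by positivity)).comp_sub_right d).const_mul _
  refine Integrable.mono' hint.integrableOn ?_ ?_
  · exact ((Real.continuous_exp.comp ((continuous_const.mul Real.continuous_cosh))).mul
      (Real.continuous_exp.comp (continuous_const.mul continuous_id))).aestronglyMeasurable
  · filter_upwards [ae_restrict_mem measurableSet_Ioi] with t ht
    rw [Real.norm_eq_abs, abs_of_nonneg (by positivity), ← Real.exp_add, ← Real.exp_add]
    apply Real.exp_le_exp.2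
    have hc := sq_le_cosh t (le_of_lt ht)
    have hkey : -x*((1 + t/2)^2/2) + c*t = e + -(x/8)*(t-d)^2 := by
      rw [he, hd]; field_simp; ring
    nlinarith [hx]

lemma cosh_mul_le_exp (ν t : ℝ) (ht : 0 ≤ t) : Real.cosh (ν * t) ≤ Real.exp (|ν| * t) := by
  rw [Real.cosh_eq]
  have h1 : Real.exp (ν * t) ≤ Real.exp (|ν| * t) :=
    Real.exp_le_exp.2 (mul_le_mul_of_nonneg_right (le_abs_self ν) ht)
  have h2 : Real.exp (-(ν * t)) ≤ Real.exp (|ν| * t) := by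
    apply Real.exp_le_exp.2
    rw [← neg_mul]
    exact mul_le_mul_of_nonneg_right (neg_le_abs ν) ht
  linarith

lemma integrableOn_K (ν x : ℝ) (hx : 0 < x) :
    IntegrableOn (fun t => Real.exp (-x * Real.cosh t) * Real.cosh (ν * t)) (Ioi (0:ℝ)) := by
  refine Integrable.mono' (integrableOn_exp_cosh x |ν| hx) ?_ ?_
  · exact ((Real.continuous_exp.comp (continuous_const.mul Real.continuous_cosh)).mul
      (Real.continuous_cosh.comp (continuous_const.mul continuous_id))).aestronglyMeasurable
  · filter_upwards [ae_restrict_mem measurableSet_Ioi] with t ht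
    rw [Real.norm_eq_abs, abs_of_nonneg (by positivity)]
    exact mul_le_mul_of_nonneg_left (cosh_mul_le_exp ν t (le_of_lt ht)) (Real.exp_pos _).le

lemma besselK_pos (ν x : ℝ) (hx : 0 < x) : 0 < besselK ν x := by
  rw [besselK]
  rw [setIntegral_pos_iff_support_of_nonneg_ae ?_ (integrableOn_K ν x hx)]
  · have : Function.support (fun t => Real.exp (-x * Real.cosh t) * Real.cosh (ν * t)) = univ := by
      ext t; simp only [Function.mem_support, mem_univ, iff_true]
      positivity
    rw [this, univ_inter]
    simp [Real.volume_Ioi]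
  · filter_upwards with t
    positivity


lemma strictConvexOn_log_cosh : StrictConvexOn ℝ univ (fun y : ℝ => Real.log (Real.cosh y)) := by
  have hD : ∀ y : ℝ, HasDerivAt (fun y : ℝ => Real.log (Real.cosh y))
      (Real.sinh y / Real.cosh y) y := fun y =>
    (Real.hasDerivAt_cosh y).log (ne_of_gt (Real.cosh_pos y))
  have hD2 : ∀ y : ℝ, HasDerivAt (fun y : ℝ => Real.sinh y / Real.cosh y)
      (1 / Real.cosh y ^ 2) y := by
    intro y
    have h := (Real.hasDerivAt_sinh y).div (Real.hasDerivAt_cosh y) (ne_of_gt (Real.cosh_pos y))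
    refine h.congr_deriv ?_
    have := Real.cosh_sq_sub_sinh_sq y
    field_simp
    linarith
  apply strictConvexOn_of_deriv2_pos convex_univ
  · exact ((Real.continuous_cosh).log (fun y => (Real.cosh_pos y).ne')).continuousOn
  · intro y _
    have e1 : deriv (fun y : ℝ => Real.log (Real.cosh y)) = fun y => Real.sinh y / Real.cosh y :=
      funext fun y => (hD y).deriv
    rw [Function.iterate_succ, Function.iterate_one, Function.comp_apply, e1]
    rw [(hD2 y).deriv]
    positivity

/-- strict log-convexity of cosh at distinct points -/
lemma cosh_strict_ineq {u v θ σ : ℝ} (huv : u ≠ v) (hθ : 0 < θ) (hσ : 0 < σ)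
    (hθσ : θ + σ = 1) :
    Real.cosh (θ * u + σ * v) < Real.cosh u ^ θ * Real.cosh v ^ σ := by
  have h := strictConvexOn_log_cosh.2 (mem_univ u) (mem_univ v) huv hθ hσ hθσ
  simp only [smul_eq_mul] at h
  calc Real.cosh (θ * u + σ * v) = Real.exp (Real.log (Real.cosh (θ*u + σ*v))) :=
        (Real.exp_log (Real.cosh_pos _)).symm
    _ < Real.exp (θ * Real.log (Real.cosh u) + σ * Real.log (Real.cosh v)) :=
        Real.exp_lt_exp.2 h
    _ = Real.cosh u ^ θ * Real.cosh v ^ σ := by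
        rw [Real.exp_add, ← Real.log_rpow (Real.cosh_pos u), ← Real.log_rpow (Real.cosh_pos v),
          Real.exp_log (Real.rpow_pos_of_pos (Real.cosh_pos u) _),
          Real.exp_log (Real.rpow_pos_of_pos (Real.cosh_pos v) _)]

/-- Hölder: `∫ f^θ g^σ ≤ (∫f)^θ (∫g)^σ`. -/
lemma integral_rpow_mul_rpow_le {α : Type*} [MeasurableSpace α] {μ : Measure α}
    {f g : α → ℝ} {θ σ : ℝ} (hθ : 0 < θ) (hσ : 0 < σ) (hθσ : θ + σ = 1)
    (hf : Integrable f μ) (hg : Integrable g μ)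
    (hf0 : 0 ≤ᶠ[ae μ] f) (hg0 : 0 ≤ᶠ[ae μ] g) :
    ∫ a, f a ^ θ * g a ^ σ ∂μ ≤ (∫ a, f a ∂μ) ^ θ * (∫ a, g a ∂μ) ^ σ := by
  have e : (1/θ).HolderConjugate (1/σ) := Real.holderConjugate_one_div hθ hσ hθσ
  have memLp : ∀ {c : ℝ} (hc : 0 < c) {h : α → ℝ}, Integrable h μ → 0 ≤ᶠ[ae μ] h →
      MemLp (fun a => h a ^ c) (ENNReal.ofReal (1/c)) μ := by
    intro c hc h hint h0
    have A : ENNReal.ofReal (1/c) ≠ 0 := by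
      rwa [Ne, ENNReal.ofReal_eq_zero, not_le, one_div_pos]
    have B : ENNReal.ofReal (1/c) ≠ ⊤ := ENNReal.ofReal_ne_top
    have hm : AEStronglyMeasurable (fun a => h a ^ c) μ :=
      (hint.aemeasurable.pow_const c).aestronglyMeasurable
    rw [← memLp_norm_rpow_iff hm A B, ENNReal.toReal_ofReal (by positivity),
      ENNReal.div_self A B, memLp_one_iff_integrable]
    apply hint.congr
    filter_upwards [h0] with a ha
    rw [Real.norm_eq_abs, abs_of_nonneg (Real.rpow_nonneg ha c), ← Real.rpow_mul ha,
      mul_one_div, div_self hc.ne', Real.rpow_one]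
  have hfθ : 0 ≤ᶠ[ae μ] fun a => f a ^ θ := hf0.mono fun a ha => Real.rpow_nonneg ha θ
  have hgσ : 0 ≤ᶠ[ae μ] fun a => g a ^ σ := hg0.mono fun a ha => Real.rpow_nonneg ha σ
  have key := MeasureTheory.integral_mul_le_Lp_mul_Lq_of_nonneg e hfθ hgσ
    (memLp hθ hf hf0) (memLp hσ hg hg0)
  rw [one_div_one_div, one_div_one_div] at key
  refine le_trans key (le_of_eq ?_)
  congr 2
  · apply integral_congr_ae
    filter_upwards [hf0] with a ha
    rw [← Real.rpow_mul ha, mul_one_div, div_self hθ.ne', Real.rpow_one]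
  · apply integral_congr_ae
    filter_upwards [hg0] with a ha
    rw [← Real.rpow_mul ha, mul_one_div, div_self hσ.ne', Real.rpow_one]

-- placeholders for already-proven lemmas
lemma besselK_strict {x : ℝ} (hx : 0 < x) {a b θ σ : ℝ} (hab : a ≠ b) (hθ : 0 < θ)
    (hσ : 0 < σ) (hθσ : θ + σ = 1) :
    besselK (θ*a + σ*b) x < besselK a x ^ θ * besselK b x ^ σ := by
  set h : ℝ → ℝ → ℝ := fun ν t => Real.exp (-x * Real.cosh t) * Real.cosh (ν * t) with hh
  have hrw : ∀ t : ℝ, h a t ^ θ * h b t ^ σ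
      = Real.exp (-x * Real.cosh t) * (Real.cosh (a*t) ^ θ * Real.cosh (b*t) ^ σ) := by
    intro t
    rw [hh]
    dsimp only
    rw [Real.mul_rpow (Real.exp_pos _).le (Real.cosh_pos _).le,
      Real.mul_rpow (Real.exp_pos _).le (Real.cosh_pos _).le,
      show Real.exp (-x*Real.cosh t) ^ θ * Real.cosh (a*t) ^ θ *
        (Real.exp (-x*Real.cosh t) ^ σ * Real.cosh (b*t) ^ σ)
        = (Real.exp (-x*Real.cosh t) ^ θ * Real.exp (-x*Real.cosh t) ^ σ) *
          (Real.cosh (a*t) ^ θ * Real.cosh (b*t) ^ σ) from by ring,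
      ← Real.rpow_add (Real.exp_pos _), hθσ, Real.rpow_one]
  have hcont : Continuous fun t : ℝ => h a t ^ θ * h b t ^ σ := by
    have : (fun t : ℝ => h a t ^ θ * h b t ^ σ)
        = fun t => Real.exp (-x * Real.cosh t) * (Real.cosh (a*t) ^ θ * Real.cosh (b*t) ^ σ) :=
      funext hrw
    rw [this]
    apply (Real.continuous_exp.comp (continuous_const.mul Real.continuous_cosh)).mul
    apply Continuous.mul
    · exact ((Real.continuous_cosh.comp (continuous_const.mul continuous_id)).rpow_const
        fun t => Or.inl (Real.cosh_pos _).ne')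
    · exact ((Real.continuous_cosh.comp (continuous_const.mul continuous_id)).rpow_const
        fun t => Or.inl (Real.cosh_pos _).ne')
  have hφint : IntegrableOn (fun t => h a t ^ θ * h b t ^ σ) (Ioi (0:ℝ)) := by
    refine Integrable.mono' (integrableOn_exp_cosh x (θ*|a| + σ*|b|) hx) hcont.aestronglyMeasurable ?_
    filter_upwards [ae_restrict_mem measurableSet_Ioi] with t ht
    rw [Real.norm_eq_abs, hrw t, abs_of_nonneg (by positivity)]
    have hta : (0:ℝ) ≤ t := (le_of_lt (mem_Ioi.mp ht))
    have h1 : Real.cosh (a*t) ^ θ ≤ Real.exp (|a| * t * θ) := by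
      rw [Real.exp_mul]
      exact Real.rpow_le_rpow (Real.cosh_pos _).le (cosh_mul_le_exp a t hta) hθ.le
    have h2 : Real.cosh (b*t) ^ σ ≤ Real.exp (|b| * t * σ) := by
      rw [Real.exp_mul]
      exact Real.rpow_le_rpow (Real.cosh_pos _).le (cosh_mul_le_exp b t hta) hσ.le
    calc Real.exp (-x * Real.cosh t) * (Real.cosh (a*t) ^ θ * Real.cosh (b*t) ^ σ)
        ≤ Real.exp (-x * Real.cosh t) * (Real.exp (|a| * t * θ) * Real.exp (|b| * t * σ)) := by
          apply mul_le_mul_of_nonneg_left _ (Real.exp_pos _).le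
          exact mul_le_mul h1 h2 (Real.rpow_nonneg (Real.cosh_pos _).le _) (Real.exp_pos _).le
      _ = Real.exp (-x * Real.cosh t) * Real.exp ((θ * |a| + σ * |b|) * t) := by
          simp only [← Real.exp_add]
          congr 1
          ring
  have hlt : ∫ t in Ioi (0:ℝ), h (θ*a + σ*b) t < ∫ t in Ioi (0:ℝ), h a t ^ θ * h b t ^ σ := by
    have hKint := integrableOn_K (θ*a + σ*b) x hx
    have hdiff : ∀ t ∈ Ioi (0:ℝ), 0 < h a t ^ θ * h b t ^ σ - h (θ*a + σ*b) t := by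
      intro t ht
      rw [hrw t, hh]
      simp only [sub_pos]
      apply mul_lt_mul_of_pos_left _ (Real.exp_pos _)
      have : (θ*a + σ*b) * t = θ*(a*t) + σ*(b*t) := by ring
      rw [this]
      refine cosh_strict_ineq ?_ hθ hσ hθσ
      intro hc
      exact hab (mul_right_cancel₀ (ne_of_gt (mem_Ioi.mp ht)) hc)
    have hD : IntegrableOn (fun t => h a t ^ θ * h b t ^ σ - h (θ*a + σ*b) t) (Ioi (0:ℝ)) :=
      hφint.sub hKint
    have hpos : 0 < ∫ t in Ioi (0:ℝ), (h a t ^ θ * h b t ^ σ - h (θ*a + σ*b) t) := by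
      rw [setIntegral_pos_iff_support_of_nonneg_ae ?_ hD]
      · have hsup : Ioi (0:ℝ) ⊆ Function.support
            (fun t => h a t ^ θ * h b t ^ σ - h (θ*a + σ*b) t) ∩ Ioi 0 :=
          fun t ht => ⟨(hdiff t ht).ne', ht⟩
        refine lt_of_lt_of_le ?_ (measure_mono hsup)
        simp [Real.volume_Ioi]
      · filter_upwards [ae_restrict_mem measurableSet_Ioi] with t ht
        exact (hdiff t ht).le
    rw [integral_sub hφint hKint] at hpos
    linarith
  have hHolder : ∫ t in Ioi (0:ℝ), h a t ^ θ * h b t ^ σ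
      ≤ (∫ t in Ioi (0:ℝ), h a t) ^ θ * (∫ t in Ioi (0:ℝ), h b t) ^ σ := by
    apply integral_rpow_mul_rpow_le hθ hσ hθσ (integrableOn_K a x hx) (integrableOn_K b x hx)
    · filter_upwards with t; positivity
    · filter_upwards with t; positivity
  calc besselK (θ*a + σ*b) x = ∫ t in Ioi (0:ℝ), h (θ*a + σ*b) t := rfl
    _ < ∫ t in Ioi (0:ℝ), h a t ^ θ * h b t ^ σ := hlt
    _ ≤ (∫ t in Ioi (0:ℝ), h a t) ^ θ * (∫ t in Ioi (0:ℝ), h b t) ^ σ := hHolder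
    _ = besselK a x ^ θ * besselK b x ^ σ := rfl

lemma strictConvexOn_log_K {x : ℝ} (hx : 0 < x) :
    StrictConvexOn ℝ (Ioi (-(1:ℝ)/2)) (fun ν => Real.log (besselK ν x)) := by
  refine ⟨convex_Ioi _, fun a _ b _ hab θ σ hθ hσ hθσ => ?_⟩
  simp only [smul_eq_mul]
  calc Real.log (besselK (θ*a + σ*b) x) < Real.log (besselK a x ^ θ * besselK b x ^ σ) := by
        apply Real.log_lt_log (besselK_pos _ x hx)
        exact besselK_strict hx hab hθ hσ hθσ
    _ = θ * Real.log (besselK a x) + σ * Real.log (besselK b x) := by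
        rw [Real.log_mul (Real.rpow_pos_of_pos (besselK_pos a x hx) _).ne'
          (Real.rpow_pos_of_pos (besselK_pos b x hx) _).ne',
          Real.log_rpow (besselK_pos a x hx), Real.log_rpow (besselK_pos b x hx)]

lemma w_meas (p : ℝ) : Measurable (fun s : ℝ => (1-s^2) ^ p) :=
  (measurable_const.sub (measurable_id.pow_const 2)).pow_const p

lemma integrableOn_weight {p : ℝ} (hp : -1 < p) :
    IntegrableOn (fun s : ℝ => (1-s^2)^p) (Ioo (-1:ℝ) 1) := by
  rcases le_or_gt p 0 with hp0 | hp0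
  · have hint1 : IntegrableOn (fun s : ℝ => (1-s)^p) (Ioo (-1:ℝ) 1) := by
      have h0 := intervalIntegral.intervalIntegrable_rpow' (a := (0:ℝ)) (b := 2) hp
      have h2 := (h0.comp_sub_left 1).symm
      norm_num at h2
      rw [intervalIntegrable_iff_integrableOn_Ioc_of_le (by norm_num)] at h2
      exact h2.mono_set Ioo_subset_Ioc_self
    have hint2 : IntegrableOn (fun s : ℝ => (1+s)^p) (Ioo (-1:ℝ) 1) := by
      have h0 := intervalIntegral.intervalIntegrable_rpow' (a := (0:ℝ)) (b := 2) hp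
      have h2 := h0.comp_add_right 1
      norm_num at h2
      rw [intervalIntegrable_iff_integrableOn_Ioc_of_le (by norm_num)] at h2
      have : IntegrableOn (fun s : ℝ => (s+1)^p) (Ioo (-1:ℝ) 1) := h2.mono_set Ioo_subset_Ioc_self
      apply this.congr_fun _ measurableSet_Ioo
      intro s _; dsimp only; rw [add_comm]
    refine (hint1.add hint2).mono' ((w_meas p).aestronglyMeasurable) ?_
    filter_upwards [ae_restrict_mem measurableSet_Ioo] with s hs
    simp only [Pi.add_apply]
    obtain ⟨hs1, hs2⟩ := hs
    have hb1 : (0:ℝ) < 1 - s := by linarith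
    have hb2 : (0:ℝ) < 1 + s := by linarith
    have hsq : (0:ℝ) < 1 - s^2 := by nlinarith
    rw [Real.norm_eq_abs, abs_of_nonneg (Real.rpow_nonneg hsq.le p)]
    have hfact : (1 - s^2 : ℝ) = (1-s)*(1+s) := by ring
    rw [hfact, Real.mul_rpow hb1.le hb2.le]
    rcases le_or_gt 0 s with hs0 | hs0
    · have h1 : (1+s)^p ≤ 1 := Real.rpow_le_one_of_one_le_of_nonpos (by linarith) hp0
      have := mul_le_of_le_one_right (Real.rpow_nonneg hb1.le p) h1
      have h2 : (0:ℝ) ≤ (1+s)^p := Real.rpow_nonneg hb2.le p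
      linarith
    · have h1 : (1-s)^p ≤ 1 := Real.rpow_le_one_of_one_le_of_nonpos (by linarith) hp0
      have := mul_le_of_le_one_left (Real.rpow_nonneg hb2.le p) h1
      have h2 : (0:ℝ) ≤ (1-s)^p := Real.rpow_nonneg hb1.le p
      linarith
  · refine (integrableOn_const (C := (1:ℝ)) measure_Ioo_lt_top.ne).mono'
      ((w_meas p).aestronglyMeasurable) ?_
    filter_upwards [ae_restrict_mem measurableSet_Ioo] with s hs
    obtain ⟨hs1, hs2⟩ := hs
    have hsq : (0:ℝ) ≤ 1 - s^2 := by nlinarith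
    rw [Real.norm_eq_abs, abs_of_nonneg (Real.rpow_nonneg hsq p)]
    exact Real.rpow_le_one hsq (by nlinarith) hp0.le

lemma integrableOn_mul_weight {p M : ℝ} (hp : -1 < p) {φ : ℝ → ℝ} (hφm : Measurable φ)
    (hφ : ∀ s ∈ Ioo (-1:ℝ) 1, |φ s| ≤ M) :
    IntegrableOn (fun s => φ s * (1-s^2)^p) (Ioo (-1:ℝ) 1) := by
  refine (((integrableOn_weight hp).const_mul M).mono'
    ((hφm.mul (w_meas p)).aestronglyMeasurable) ?_)
  filter_upwards [ae_restrict_mem measurableSet_Ioo] with s hs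
  have hsq : (0:ℝ) ≤ 1 - s^2 := by obtain ⟨h1,h2⟩ := hs; nlinarith
  rw [Real.norm_eq_abs, abs_mul, abs_of_nonneg (Real.rpow_nonneg hsq p)]
  exact mul_le_mul_of_nonneg_right (hφ s hs) (Real.rpow_nonneg hsq p)

lemma integral_neg_image {s : Set ℝ} (hs : MeasurableSet s) (g : ℝ → ℝ) :
    ∫ u in (fun t : ℝ => -t) '' s, g u = ∫ t in s, g (-t) := by
  have h := integral_image_eq_integral_abs_deriv_smul hs
    (fun t _ => (hasDerivAt_neg t).hasDerivWithinAt) (neg_injective.injOn) g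
  simpa using h

lemma sq_image_Ioo : (fun t : ℝ => t^2) '' Ioo (0:ℝ) 1 = Ioo (0:ℝ) 1 := by
  ext y; constructor
  · rintro ⟨t, ⟨h1, h2⟩, rfl⟩
    exact ⟨by dsimp only; positivity, by dsimp only; nlinarith⟩
  · rintro ⟨h1, h2⟩
    refine ⟨Real.sqrt y, ⟨Real.sqrt_pos.2 h1, ?_⟩, Real.sq_sqrt h1.le⟩
    have := Real.sqrt_lt_sqrt h1.le h2
    rwa [Real.sqrt_one] at this

lemma integral_sq_subst (g : ℝ → ℝ) :
    ∫ u in Ioo (0:ℝ) 1, g u = ∫ t in Ioo (0:ℝ) 1, 2*t * g (t^2) := by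
  conv_lhs => rw [← sq_image_Ioo]
  rw [integral_image_eq_integral_abs_deriv_smul measurableSet_Ioo
    (f' := fun t => 2*t) (fun t _ => by simpa using (hasDerivAt_pow 2 t).hasDerivWithinAt)
    (fun a ha b hb e => by
      rw [← Real.sqrt_sq ha.1.le, ← Real.sqrt_sq hb.1.le, e]) g]
  apply setIntegral_congr_fun measurableSet_Ioo
  intro t ht
  dsimp only
  rw [smul_eq_mul, abs_of_pos (by linarith [ht.1] : (0:ℝ) < 2*t)]

lemma beta_real {a b : ℝ} (ha : 0 < a) (hb : 0 < b) :
    ∫ u in Ioo (0:ℝ) 1, u ^ (a-1) * (1-u) ^ (b-1)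
      = Real.Gamma a * Real.Gamma b / Real.Gamma (a+b) := by
  have hc := Complex.Gamma_mul_Gamma_eq_betaIntegral
    (s := (a:ℂ)) (t := (b:ℂ)) (by simpa using ha) (by simpa using hb)
  have h1 : Complex.betaIntegral (a:ℂ) (b:ℂ)
      = ((∫ u in (0:ℝ)..1, u ^ (a-1) * (1-u) ^ (b-1) : ℝ) : ℂ) := by
    rw [Complex.betaIntegral, ← intervalIntegral.integral_ofReal]
    apply intervalIntegral.integral_congr
    intro t ht
    rw [uIcc_of_le (by norm_num : (0:ℝ) ≤ 1)] at ht
    dsimp only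
    rw [Complex.ofReal_mul, Complex.ofReal_cpow ht.1 (a-1),
      Complex.ofReal_cpow (by linarith [ht.2] : (0:ℝ) ≤ 1 - t) (b-1)]
    push_cast
    rfl
  have h2 : (∫ u in (0:ℝ)..1, u ^ (a-1) * (1-u) ^ (b-1) : ℝ)
      = ∫ u in Ioo (0:ℝ) 1, u ^ (a-1) * (1-u) ^ (b-1) := by
    rw [intervalIntegral.integral_of_le (by norm_num : (0:ℝ) ≤ 1),
      integral_Ioc_eq_integral_Ioo]
  rw [h1, h2] at hc
  have hG : Real.Gamma a * Real.Gamma b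
      = Real.Gamma (a+b) * ∫ u in Ioo (0:ℝ) 1, u ^ (a-1) * (1-u) ^ (b-1) := by
    have := hc
    rw [Complex.Gamma_ofReal, Complex.Gamma_ofReal] at this
    rw [show ((a:ℂ) + b) = ((a+b : ℝ) : ℂ) by push_cast; ring, Complex.Gamma_ofReal] at this
    exact_mod_cast this
  have hGab : Real.Gamma (a+b) ≠ 0 := (Real.Gamma_pos_of_pos (by linarith)).ne'
  field_simp [hGab] at hG ⊢
  linarith [hG]


lemma Gamma_nat_half (n : ℕ) :
    Real.Gamma ((n:ℝ) + 1/2) = Real.sqrt π * (2*n).factorial / (4^n * n.factorial) := by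
  induction n with
  | zero =>
    rw [show ((0:ℕ):ℝ) + 1/2 = 1/2 by norm_num, Real.Gamma_one_half_eq]
    norm_num
  | succ n ih =>
    have hne : ((n:ℝ) + 1/2) ≠ 0 := by positivity
    have h1 : ((n+1:ℕ):ℝ) + 1/2 = ((n:ℝ) + 1/2) + 1 := by push_cast; ring
    rw [h1, Real.Gamma_add_one hne, ih]
    have h2 : (2*(n+1)) = (2*n+1) + 1 := by ring
    rw [h2, Nat.factorial_succ, Nat.factorial_succ, Nat.factorial_succ (n := n)]
    push_cast
    have h4 : (4:ℝ)^(n+1) = 4 * 4^n := by ring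
    rw [h4]
    have hfn : ((n.factorial:ℝ)) ≠ 0 := Nat.cast_ne_zero.2 n.factorial_ne_zero
    field_simp
    ring
  
lemma J_odd (k : ℕ) (p : ℝ) : ∫ s in Ioo (-1:ℝ) 1, s^(2*k+1) * (1-s^2)^p = 0 := by
  have him : (fun t : ℝ => -t) '' Ioo (-1:ℝ) 1 = Ioo (-1:ℝ) 1 := by
    ext y
    constructor
    · rintro ⟨t, ⟨h1, h2⟩, rfl⟩
      exact ⟨by dsimp only; linarith, by dsimp only; linarith⟩
    · rintro ⟨h1, h2⟩
      exact ⟨-y, ⟨by linarith, by linarith⟩, by ring⟩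
  have h := integral_neg_image (s := Ioo (-1:ℝ) 1) measurableSet_Ioo (fun s : ℝ => s^(2*k+1) * (1-s^2)^p)
  rw [him] at h
  have h2 : ∀ t : ℝ, (-t)^(2*k+1) * (1-(-t)^2)^p = -(t^(2*k+1) * (1-t^2)^p) := by
    intro t
    rw [Odd.neg_pow ⟨k, by ring⟩, neg_sq]
    ring
  simp only [h2] at h
  rw [integral_neg] at h
  linarith

lemma J_val (n : ℕ) {ν : ℝ} (hν : -1/2 < ν) :
    ∫ s in Ioo (-1:ℝ) 1, s^(2*n) * (1-s^2)^(ν-1/2)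
      = Real.Gamma ((n:ℝ)+1/2) * Real.Gamma (ν+1/2) / Real.Gamma ((n:ℝ)+ν+1) := by
  have hp : (-1:ℝ) < ν - 1/2 := by linarith
  have hintOn : IntegrableOn (fun s : ℝ => s^(2*n) * (1-s^2)^(ν-1/2)) (Ioo (-1:ℝ) 1) := by
    apply integrableOn_mul_weight hp (measurable_id.pow_const _)
    intro s hs
    rw [abs_pow]
    apply pow_le_one₀ (abs_nonneg s)
    rw [abs_le]; exact ⟨hs.1.le, hs.2.le⟩
  -- split the integral
  have hsplit : Ioc (-1:ℝ) 0 ∪ Ioo (0:ℝ) 1 = Ioo (-1:ℝ) 1 :=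
    Ioc_union_Ioo_eq_Ioo (by norm_num) (by norm_num)
  have hdisj : Disjoint (Ioc (-1:ℝ) 0) (Ioo (0:ℝ) 1) := by
    rw [Set.disjoint_left]
    rintro y ⟨_, h2⟩ ⟨h3, _⟩
    linarith
  have hsum : ∫ s in Ioo (-1:ℝ) 1, s^(2*n) * (1-s^2)^(ν-1/2)
      = (∫ s in Ioc (-1:ℝ) 0, s^(2*n) * (1-s^2)^(ν-1/2))
        + ∫ s in Ioo (0:ℝ) 1, s^(2*n) * (1-s^2)^(ν-1/2) := by
    rw [← hsplit, setIntegral_union hdisj measurableSet_Ioo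
      (hintOn.mono_set (by rw [← hsplit]; exact subset_union_left))
      (hintOn.mono_set (by rw [← hsplit]; exact subset_union_right))]
  -- reflection
  have hrefl : ∫ s in Ioc (-1:ℝ) 0, s^(2*n) * (1-s^2)^(ν-1/2)
      = ∫ s in Ioo (0:ℝ) 1, s^(2*n) * (1-s^2)^(ν-1/2) := by
    have him : (fun t : ℝ => -t) '' Ico (0:ℝ) 1 = Ioc (-1:ℝ) 0 := by
      ext y
      constructor
      · rintro ⟨t, ⟨h1, h2⟩, rfl⟩
        exact ⟨by dsimp only; linarith, by dsimp only; linarith⟩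
      · rintro ⟨h1, h2⟩
        exact ⟨-y, ⟨by linarith, by linarith⟩, by ring⟩
    rw [← him, integral_neg_image (s := Ico (0:ℝ) 1) measurableSet_Ico]
    have h2 : ∀ t : ℝ, (-t)^(2*n) * (1-(-t)^2)^(ν-1/2) = t^(2*n) * (1-t^2)^(ν-1/2) := by
      intro t
      rw [Even.neg_pow ⟨n, by ring⟩, neg_sq]
    simp only [h2]
    rw [integral_Ico_eq_integral_Ioo]
  -- substitution and beta
  have hbeta := beta_real (a := (n:ℝ)+1/2) (b := ν+1/2) (by positivity) (by linarith)
  rw [integral_sq_subst (fun u => u ^ ((n:ℝ)+1/2-1) * (1-u) ^ (ν+1/2-1))] at hbeta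
  have hptw : ∀ t ∈ Ioo (0:ℝ) 1,
      2*t * ((t^2) ^ ((n:ℝ)+1/2-1) * (1-t^2) ^ (ν+1/2-1))
        = 2 * (t^(2*n) * (1-t^2)^(ν-1/2)) := by
    intro t ht
    have ht0 : (0:ℝ) < t := ht.1
    have e1 : (t^2 : ℝ) ^ ((n:ℝ)+1/2-1) = t ^ (2*((n:ℝ)+1/2-1)) := by
      rw [← Real.rpow_natCast t 2, ← Real.rpow_mul ht0.le]
      norm_num
    have e2 : t^(2*n) = t * t ^ (2*((n:ℝ)+1/2-1)) := by
      rw [← Real.rpow_natCast t (2*n),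
        show (((2*n:ℕ)):ℝ) = 1 + 2*((n:ℝ)+1/2-1) by push_cast; ring,
        Real.rpow_add ht0, Real.rpow_one]
    rw [e1]
    have e3 : ν+1/2-1 = ν-1/2 := by ring
    rw [e3]
    calc 2*t * (t ^ (2*((n:ℝ)+1/2-1)) * (1-t^2) ^ (ν-1/2))
        = 2 * ((t * t ^ (2*((n:ℝ)+1/2-1))) * (1-t^2) ^ (ν-1/2)) := by ring
      _ = 2 * (t^(2*n) * (1-t^2)^(ν-1/2)) := by rw [e2]
  rw [setIntegral_congr_fun measurableSet_Ioo hptw] at hbeta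
  rw [integral_const_mul] at hbeta
  have hGsum : (n:ℝ)+1/2 + (ν+1/2) = (n:ℝ)+ν+1 := by ring
  rw [hGsum] at hbeta
  rw [hsum, hrefl, ← two_mul, hbeta]


noncomputable def Fint (x ν : ℝ) : ℝ :=
  ∫ s in Ioo (-1:ℝ) 1, Real.exp (x*s) * (1-s^2) ^ (ν - 1/2)

lemma Fint_eq_tsum (x ν : ℝ) (hx : 0 < x) (hν : -1/2 < ν) :
    Fint x ν = ∑' k : ℕ, x^(2*k) / ((2*k).factorial : ℝ)
      * (Real.Gamma ((k:ℝ)+1/2) * Real.Gamma (ν+1/2) / Real.Gamma ((k:ℝ)+ν+1)) := by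
  set w : ℝ → ℝ := fun s => (1-s^2) ^ (ν - 1/2) with hw
  have hp : (-1:ℝ) < ν - 1/2 := by linarith
  have hw0 : ∀ s ∈ Ioo (-1:ℝ) 1, 0 ≤ w s := by
    intro s hs
    obtain ⟨u, v⟩ := hs
    have : (0:ℝ) < 1 - s^2 := by nlinarith
    exact (Real.rpow_nonneg this.le _)
  set Cw : ℝ := ∫ s in Ioo (-1:ℝ) 1, w s with hCw
  have hCw0 : 0 ≤ Cw := by
    rw [hCw]
    apply setIntegral_nonneg measurableSet_Ioo hw0
  have hφb : ∀ (n : ℕ), ∀ s ∈ Ioo (-1:ℝ) 1, |(x*s)^n / (n.factorial:ℝ)| ≤ x^n / n.factorial := by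
    intro n s hs
    rw [abs_div, abs_of_nonneg (by positivity : (0:ℝ) ≤ ((n.factorial:ℕ):ℝ)), abs_pow]
    gcongr
    rw [abs_mul, abs_of_pos hx]
    calc x * |s| ≤ x * 1 := by
          apply mul_le_mul_of_nonneg_left _ hx.le
          rw [abs_le]; exact ⟨hs.1.le, hs.2.le⟩
      _ = x := mul_one x
  have hterm : ∀ n : ℕ, IntegrableOn (fun s : ℝ => (x*s)^n / (n.factorial:ℝ) * w s)
      (Ioo (-1:ℝ) 1) := fun n =>
    integrableOn_mul_weight hp (((measurable_const.mul measurable_id).pow_const n).div_const _)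
      (hφb n)
  have hnorm : ∀ n : ℕ, (∫ s in Ioo (-1:ℝ) 1, ‖(x*s)^n / (n.factorial:ℝ) * w s‖)
      ≤ x^n / n.factorial * Cw := by
    intro n
    have h1 : ∫ s in Ioo (-1:ℝ) 1, ‖(x*s)^n / (n.factorial:ℝ) * w s‖
        ≤ ∫ s in Ioo (-1:ℝ) 1, x^n / n.factorial * w s := by
      apply setIntegral_mono_on (hterm n).norm ((integrableOn_weight hp).const_mul _)
        measurableSet_Ioo
      intro s hs
      rw [norm_mul, Real.norm_eq_abs, Real.norm_eq_abs, abs_of_nonneg (hw0 s hs)]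
      exact mul_le_mul_of_nonneg_right (hφb n s hs) (hw0 s hs)
    rw [integral_const_mul] at h1
    exact h1
  have hsummable : Summable (fun n : ℕ => ∫ s in Ioo (-1:ℝ) 1,
      ‖(x*s)^n / (n.factorial:ℝ) * w s‖) := by
    apply Summable.of_nonneg_of_le (fun n => integral_nonneg (fun s => norm_nonneg _)) hnorm
    exact (Real.summable_pow_div_factorial x).mul_right Cw
  have hswap := MeasureTheory.integral_tsum_of_summable_integral_norm hterm hsummable
  have hptsum : ∀ s : ℝ, ∑' n : ℕ, ((x*s)^n / (n.factorial:ℝ) * w s)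
      = Real.exp (x*s) * w s := by
    intro s
    rw [tsum_mul_right]
    congr 1
    rw [Real.exp_eq_exp_ℝ, NormedSpace.exp_eq_tsum_div]
  have hF : Fint x ν = ∑' n : ℕ, ∫ s in Ioo (-1:ℝ) 1, (x*s)^n / (n.factorial:ℝ) * w s := by
    rw [Fint, hswap]
    apply integral_congr_ae
    filter_upwards with s
    exact (hptsum s).symm
  have hTval : ∀ n : ℕ, (∫ s in Ioo (-1:ℝ) 1, (x*s)^n / (n.factorial:ℝ) * w s)
      = x^n / (n.factorial:ℝ) * ∫ s in Ioo (-1:ℝ) 1, s^n * w s := by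
    intro n
    rw [← integral_const_mul]
    apply setIntegral_congr_fun measurableSet_Ioo
    intro s _
    dsimp only
    rw [mul_pow]
    ring
  set T : ℕ → ℝ := fun n => x^n / (n.factorial:ℝ) * ∫ s in Ioo (-1:ℝ) 1, s^n * w s with hT
  have hF2 : Fint x ν = ∑' n, T n := by
    rw [hF]
    exact tsum_congr hTval
  have hJb : ∀ n : ℕ, |∫ s in Ioo (-1:ℝ) 1, s^n * w s| ≤ Cw := by
    intro n
    have h1 := norm_integral_le_integral_norm (μ := volume.restrict (Ioo (-1:ℝ) 1))
      (f := fun s => s^n * w s)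
    rw [Real.norm_eq_abs] at h1
    refine h1.trans ?_
    rw [hCw]
    have hintn : IntegrableOn (fun s : ℝ => s ^ n * w s) (Ioo (-1:ℝ) 1) := by
      apply integrableOn_mul_weight (M := 1) hp (measurable_id'.pow_const n)
      intro s hs
      rw [abs_pow]
      apply pow_le_one₀ (abs_nonneg s)
      rw [abs_le]; exact ⟨hs.1.le, hs.2.le⟩
    apply setIntegral_mono_on hintn.norm (integrableOn_weight hp) measurableSet_Ioo
    intro s hs
    rw [norm_mul, Real.norm_eq_abs, Real.norm_eq_abs, abs_of_nonneg (hw0 s hs), abs_pow]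
    have : |s|^n ≤ 1 := by
      apply pow_le_one₀ (abs_nonneg s)
      rw [abs_le]; exact ⟨hs.1.le, hs.2.le⟩
    nlinarith [hw0 s hs]
  have hTs : Summable T := by
    apply Summable.of_norm_bounded ((Real.summable_pow_div_factorial x).mul_right Cw)
    intro n
    rw [hT, Real.norm_eq_abs, abs_mul, abs_div, abs_of_nonneg (pow_nonneg hx.le n),
      abs_of_nonneg (by positivity : (0:ℝ) ≤ ((n.factorial:ℕ):ℝ))]
    exact mul_le_mul_of_nonneg_left (hJb n) (by positivity)
  have heven : Summable (fun k : ℕ => T (2*k)) :=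
    hTs.comp_injective (fun a b h => by omega)
  have hodd : Summable (fun k : ℕ => T (2*k+1)) :=
    hTs.comp_injective (fun a b h => by omega)
  rw [hF2, ← tsum_even_add_odd heven hodd]
  have hoddzero : ∀ k : ℕ, T (2*k+1) = 0 := by
    intro k
    rw [hT]
    dsimp only
    rw [hw, J_odd k (ν - 1/2), mul_zero]
  rw [tsum_congr hoddzero, tsum_zero, add_zero]
  apply tsum_congr
  intro k
  rw [hT]
  dsimp only
  rw [hw, J_val k hν]

lemma key_id {x ν : ℝ} (hx : 0 < x) (hν : -1/2 < ν) :
    Real.sqrt π * Real.Gamma (ν+1/2) / (2 * x^ν) * besselI ν x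
      = (2:ℝ)^(-(ν+1)) * Fint x ν := by
  rw [besselI, Fint_eq_tsum x ν hx hν, ← tsum_mul_left, ← tsum_mul_left]
  apply tsum_congr
  intro n
  have hx2 : (0:ℝ) < x/2 := by linarith
  have e1 : (x/2) ^ (2*(n:ℝ)+ν) = (x/2)^(2*n) * (x/2)^ν := by
    rw [Real.rpow_add hx2, ← Real.rpow_natCast (x/2) (2*n)]
    congr 2
    push_cast
    ring
  have e2 : (x/2 : ℝ)^ν = x^ν / 2^ν := Real.div_rpow hx.le (by norm_num : (0:ℝ) ≤ 2) ν
  have e3 : ((2:ℝ))^(-(ν+1)) = 1 / (2^ν * 2) := by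
    rw [Real.rpow_neg (by norm_num), Real.rpow_add (by norm_num : (0:ℝ) < 2),
      Real.rpow_one, one_div]
  have e4 : ((x:ℝ)/2)^(2*n) = x^(2*n) / 2^(2*n) := div_pow x 2 (2*n)
  have e5 : ((2:ℝ))^(2*n) = 4^n := by
    rw [pow_mul]
    norm_num
  have hxν : (0:ℝ) < x^ν := Real.rpow_pos_of_pos hx ν
  have h2ν : (0:ℝ) < (2:ℝ)^ν := Real.rpow_pos_of_pos (by norm_num) ν
  have hΓ : (0:ℝ) < Real.Gamma ((n:ℝ)+ν+1) := by
    apply Real.Gamma_pos_of_pos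
    have : ((n:ℝ)) ≥ 0 := Nat.cast_nonneg n
    linarith
  have hfn : ((n.factorial:ℕ):ℝ) ≠ 0 := by positivity
  have hf2n : (((2*n).factorial:ℕ):ℝ) ≠ 0 := by positivity
  rw [Gamma_nat_half n, e1, e2, e3, e4, e5]
  have h4 : (0:ℝ) < 4^n := by positivity
  field_simp



lemma integrableOn_Fg (x ν : ℝ) (hν : -1/2 < ν) :
    IntegrableOn (fun s : ℝ => Real.exp (x*s) * (1-s^2) ^ (ν - 1/2)) (Ioo (-1:ℝ) 1) := by
  apply integrableOn_mul_weight (M := Real.exp |x|) (by linarith)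
    ((measurable_const.mul measurable_id').exp)
  intro s hs
  rw [abs_of_nonneg (Real.exp_pos _).le]
  apply Real.exp_le_exp.2
  calc x * s ≤ |x * s| := le_abs_self _
    _ = |x| * |s| := abs_mul x s
    _ ≤ |x| * 1 := by
        apply mul_le_mul_of_nonneg_left _ (abs_nonneg x)
        rw [abs_le]; exact ⟨hs.1.le, hs.2.le⟩
    _ = |x| := mul_one _

lemma Fint_pos (x ν : ℝ) (hν : -1/2 < ν) : 0 < Fint x ν := by
  rw [Fint, setIntegral_pos_iff_support_of_nonneg_ae ?_ (integrableOn_Fg x ν hν)]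
  · have hsup : Ioo (-1:ℝ) 1 ⊆ Function.support
        (fun s : ℝ => Real.exp (x*s) * (1-s^2) ^ (ν - 1/2)) ∩ Ioo (-1:ℝ) 1 := by
      intro s hs
      have h1 : (0:ℝ) < 1 - s^2 := by obtain ⟨u,v⟩ := hs; nlinarith
      refine ⟨?_, hs⟩
      simp only [Function.mem_support]
      positivity
    refine lt_of_lt_of_le ?_ (measure_mono hsup)
    rw [Real.volume_Ioo]
    norm_num
  · filter_upwards [ae_restrict_mem measurableSet_Ioo] with s hs
    have h1 : (0:ℝ) < 1 - s^2 := by obtain ⟨u,v⟩ := hs; nlinarith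
    positivity

lemma convexOn_log_Fint {x : ℝ} (hx : 0 < x) :
    ConvexOn ℝ (Ioi (-(1:ℝ)/2)) (fun ν => Real.log (Fint x ν)) := by
  refine convexOn_iff_forall_pos.mpr ⟨convex_Ioi _, ?_⟩
  intro a ha b hb θ σ hθ hσ hθσ
  simp only [smul_eq_mul, mem_Ioi] at *
  have ham : -1/2 < a := by linarith
  have hbm : -1/2 < b := by linarith
  have hm : -1/2 < θ*a + σ*b := by nlinarith
  have hptw : ∀ s ∈ Ioo (-1:ℝ) 1,
      Real.exp (x*s) * (1-s^2) ^ ((θ*a+σ*b) - 1/2)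
        = (Real.exp (x*s) * (1-s^2) ^ (a - 1/2)) ^ θ
          * (Real.exp (x*s) * (1-s^2) ^ (b - 1/2)) ^ σ := by
    intro s hs
    have h1 : (0:ℝ) < 1 - s^2 := by obtain ⟨u,v⟩ := hs; nlinarith
    rw [Real.mul_rpow (Real.exp_pos _).le (Real.rpow_nonneg h1.le _),
      Real.mul_rpow (Real.exp_pos _).le (Real.rpow_nonneg h1.le _),
      ← Real.rpow_mul h1.le, ← Real.rpow_mul h1.le, ← Real.exp_mul, ← Real.exp_mul,
      show Real.exp (x*s*θ) * (1-s^2) ^ ((a-1/2)*θ) * (Real.exp (x*s*σ) * (1-s^2) ^ ((b-1/2)*σ))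
        = (Real.exp (x*s*θ) * Real.exp (x*s*σ)) * ((1-s^2) ^ ((a-1/2)*θ) * (1-s^2) ^ ((b-1/2)*σ))
        from by ring,
      ← Real.exp_add, ← Real.rpow_add h1,
      show x*s*θ + x*s*σ = x*s*(θ+σ) from by ring, hθσ, mul_one,
      show (a-1/2)*θ + (b-1/2)*σ = θ*a + σ*b - (θ+σ)/2 from by ring, hθσ]
  have hm_eq : Fint x (θ*a+σ*b) = ∫ s in Ioo (-1:ℝ) 1,
      (Real.exp (x*s) * (1-s^2) ^ (a - 1/2)) ^ θ
        * (Real.exp (x*s) * (1-s^2) ^ (b - 1/2)) ^ σ := by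
    rw [Fint]
    exact setIntegral_congr_fun measurableSet_Ioo hptw
  have hHolder := integral_rpow_mul_rpow_le hθ hσ hθσ (integrableOn_Fg x a ham)
    (integrableOn_Fg x b hbm) ?_ ?_
  · have hle : Fint x (θ*a+σ*b) ≤ Fint x a ^ θ * Fint x b ^ σ := by
      rw [hm_eq]
      exact hHolder
    calc Real.log (Fint x (θ*a+σ*b)) ≤ Real.log (Fint x a ^ θ * Fint x b ^ σ) :=
          Real.log_le_log (Fint_pos x _ hm) hle
      _ = θ * Real.log (Fint x a) + σ * Real.log (Fint x b) := by
          rw [Real.log_mul (Real.rpow_pos_of_pos (Fint_pos x a ham) _).ne'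
            (Real.rpow_pos_of_pos (Fint_pos x b hbm) _).ne',
            Real.log_rpow (Fint_pos x a ham), Real.log_rpow (Fint_pos x b hbm)]
  · filter_upwards [ae_restrict_mem measurableSet_Ioo] with s hs
    have h1 : (0:ℝ) < 1 - s^2 := by obtain ⟨u,v⟩ := hs; nlinarith
    positivity
  · filter_upwards [ae_restrict_mem measurableSet_Ioo] with s hs
    have h1 : (0:ℝ) < 1 - s^2 := by obtain ⟨u,v⟩ := hs; nlinarith
    positivity

lemma strictConvexOn_congr {s : Set ℝ} {f g : ℝ → ℝ} (hf : StrictConvexOn ℝ s f)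
    (h : ∀ x ∈ s, f x = g x) : StrictConvexOn ℝ s g := by
  refine ⟨hf.1, fun a ha b hb hab θ σ hθ hσ hθσ => ?_⟩
  rw [← h a ha, ← h b hb, ← h _ (hf.1 ha hb hθ.le hσ.le hθσ)]
  exact hf.2 ha hb hab hθ hσ hθσ

lemma convexOn_affine : ConvexOn ℝ (Ioi (-(1:ℝ)/2)) (fun ν : ℝ => (-(ν+1))*Real.log 2) := by
  refine ⟨convex_Ioi _, fun a _ b _ θ σ hθ hσ hθσ => ?_⟩
  simp only [smul_eq_mul]
  apply le_of_eq
  linear_combination (Real.log 2) * hθσ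

end Aux14

theorem stmt14 (x : ℝ) (hx : 0 < x) :
    StrictConvexOn ℝ (Ioi (-(1 : ℝ) / 2))
      (fun ν : ℝ => Real.log
        (Real.sqrt Real.pi * Real.Gamma (ν + 1 / 2) / (2 * x ^ ν) *
          (besselI ν x * besselK ν x))) := by
  have base : StrictConvexOn ℝ (Ioi (-(1:ℝ)/2))
      (fun ν : ℝ => ((-(ν+1))*Real.log 2 + Real.log (Aux14.Fint x ν)) + Real.log (besselK ν x)) := by
    have h1 := (Aux14.convexOn_affine.add (Aux14.convexOn_log_Fint hx)).add_strictConvexOn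
      (Aux14.strictConvexOn_log_K hx)
    exact Aux14.strictConvexOn_congr h1 (fun ν _ => by simp [Pi.add_apply])
  apply Aux14.strictConvexOn_congr base
  intro ν hν
  have hν' : -1/2 < ν := hν
  have hkey := Aux14.key_id hx hν'
  have hKpos := Aux14.besselK_pos ν x hx
  have hFpos := Aux14.Fint_pos x ν hν'
  have h2pos : (0:ℝ) < (2:ℝ)^(-(ν+1)) := Real.rpow_pos_of_pos (by norm_num) _
  have hprod : Real.sqrt Real.pi * Real.Gamma (ν + 1/2) / (2 * x^ν) * (besselI ν x * besselK ν x)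
      = ((2:ℝ)^(-(ν+1)) * Aux14.Fint x ν) * besselK ν x := by
    rw [← hkey]; ring
  rw [hprod, Real.log_mul (by positivity) hKpos.ne', Real.log_mul h2pos.ne' hFpos.ne',
    Real.log_rpow (by norm_num : (0:ℝ) < 2)]
end

section
/- For all ν > 1/2 and x > 0, the Turán type inequality P_ν²(x) - P_{ν-1}(x) P_{ν+1}(x) < P_ν²(x) / (ν + 1/2) holds, where P_ν(x) = I_ν(x) K_ν(x). -/
open Real MeasureTheory Set Filter

namespace Turan15Aux

/-- Series coefficients of `besselI` with the `(x/2)^μ` factor removed. -/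
noncomputable def c (q μ : ℝ) (n : ℕ) : ℝ :=
  q ^ n / ((n.factorial : ℝ) * Real.Gamma ((n : ℝ) + μ + 1))

lemma arg_pos {μ : ℝ} (hμ : -(1 : ℝ) / 2 < μ) (n : ℕ) : 0 < (n : ℝ) + μ + 1 := by
  have : (0 : ℝ) ≤ n := n.cast_nonneg
  linarith

lemma c_pos {q μ : ℝ} (hq : 0 < q) (hμ : -(1 : ℝ) / 2 < μ) (n : ℕ) : 0 < c q μ n := by
  have h1 : (0 : ℝ) < Real.Gamma ((n : ℝ) + μ + 1) := Real.Gamma_pos_of_pos (arg_pos hμ n)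
  have h2 : (0 : ℝ) < (n.factorial : ℝ) := by exact_mod_cast n.factorial_pos
  exact div_pos (pow_pos hq n) (mul_pos h2 h1)

lemma summable_c {q μ : ℝ} (hq : 0 < q) (hμ : -(1 : ℝ) / 2 < μ) : Summable (c q μ) := by
  apply summable_of_ratio_test_tendsto_lt_one (l := 0) one_pos
  · exact Filter.Eventually.of_forall fun n => (c_pos hq hμ n).ne'
  · have key : ∀ n : ℕ, ‖c q μ (n + 1)‖ / ‖c q μ n‖ =
        q / (((n : ℝ) + 1) * ((n : ℝ) + μ + 1)) := by
      intro n
      have hΓ : (0 : ℝ) < Real.Gamma ((n : ℝ) + μ + 1) := Real.Gamma_pos_of_pos (arg_pos hμ n)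
      have hfac : (0 : ℝ) < (n.factorial : ℝ) := by exact_mod_cast n.factorial_pos
      have hrec : Real.Gamma (((n + 1 : ℕ) : ℝ) + μ + 1) =
          ((n : ℝ) + μ + 1) * Real.Gamma ((n : ℝ) + μ + 1) := by
        have : (((n + 1 : ℕ) : ℝ) + μ + 1) = ((n : ℝ) + μ + 1) + 1 := by push_cast; ring
        rw [this, Real.Gamma_add_one (arg_pos hμ n).ne']
      have hn1 : ((n:ℝ) + 1) ≠ 0 := by positivity
      have hc : c q μ (n + 1) = q / (((n:ℝ) + 1) * ((n:ℝ) + μ + 1)) * c q μ n := by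
        unfold c
        rw [hrec, Nat.factorial_succ, pow_succ]
        push_cast
        field_simp
      rw [Real.norm_of_nonneg (c_pos hq hμ (n + 1)).le, Real.norm_of_nonneg (c_pos hq hμ n).le,
        hc, mul_div_assoc, div_self (c_pos hq hμ n).ne', mul_one]
    simp only [key]
    have h1 : Tendsto (fun n : ℕ => ((n : ℝ) + 1) * ((n : ℝ) + μ + 1)) atTop atTop := by
      apply Filter.Tendsto.atTop_mul_atTop₀
      · exact tendsto_atTop_add_const_right _ _ tendsto_natCast_atTop_atTop
      · exact tendsto_atTop_add_const_right _ _
          (tendsto_atTop_add_const_right _ _ tendsto_natCast_atTop_atTop)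
    exact Tendsto.div_atTop tendsto_const_nhds h1

lemma besselI_eq {μ x : ℝ} (hx : 0 < x) :
    besselI μ x = (x / 2) ^ μ * ∑' n, c ((x / 2) ^ 2) μ n := by
  have hx2 : (0 : ℝ) < x / 2 := by linarith
  rw [besselI, ← tsum_mul_left]
  congr 1
  funext n
  have hpow : (x / 2) ^ (2 * (n : ℝ) + μ) = ((x / 2) ^ 2) ^ n * (x / 2) ^ μ := by
    rw [Real.rpow_add hx2]
    congr 1
    have : (2 : ℝ) * (n : ℝ) = ((2 * n : ℕ) : ℝ) := by push_cast; ring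
    rw [this, Real.rpow_natCast, pow_mul]
  rw [hpow, c]
  ring

lemma besselI_pos {μ x : ℝ} (hx : 0 < x) (hμ : -(1 : ℝ) / 2 < μ) : 0 < besselI μ x := by
  rw [besselI_eq hx]
  have hx2 : (0 : ℝ) < x / 2 := by linarith
  have hq : (0 : ℝ) < (x / 2) ^ 2 := by positivity
  apply mul_pos (Real.rpow_pos_of_pos hx2 μ)
  exact Summable.tsum_pos (summable_c hq hμ) (fun n => (c_pos hq hμ n).le) 0 (c_pos hq hμ 0)

/-- Cauchy–Schwarz for infinite sums of nonnegative reals. -/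
lemma tsum_cauchy_schwarz {f g : ℕ → ℝ} (hf : ∀ n, 0 ≤ f n) (hg : ∀ n, 0 ≤ g n)
    (hf2 : Summable fun n => f n ^ 2) (hg2 : Summable fun n => g n ^ 2) :
    (∑' n, f n * g n) ^ 2 ≤ (∑' n, f n ^ 2) * ∑' n, g n ^ 2 := by
  have hfg : Summable fun n => f n * g n := by
    apply Summable.of_nonneg_of_le (fun n => mul_nonneg (hf n) (hg n))
      (fun n => ?_) ((hf2.add hg2).div_const 2)
    have := sq_nonneg (f n - g n)
    nlinarith
  have hA : (0 : ℝ) ≤ ∑' n, f n ^ 2 := tsum_nonneg fun n => sq_nonneg _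
  have hB : (0 : ℝ) ≤ ∑' n, g n ^ 2 := tsum_nonneg fun n => sq_nonneg _
  have key : ∑' n, f n * g n ≤ Real.sqrt ((∑' n, f n ^ 2) * ∑' n, g n ^ 2) := by
    apply Summable.tsum_le_of_sum_le hfg
    intro s
    have h1 := Finset.sum_mul_sq_le_sq_mul_sq s f g
    have h2 : (∑ n ∈ s, f n ^ 2) ≤ ∑' n, f n ^ 2 :=
      Summable.sum_le_tsum s (fun n _ => sq_nonneg _) hf2
    have h3 : (∑ n ∈ s, g n ^ 2) ≤ ∑' n, g n ^ 2 :=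
      Summable.sum_le_tsum s (fun n _ => sq_nonneg _) hg2
    have h4 : (∑ n ∈ s, f n * g n) ^ 2 ≤ (∑' n, f n ^ 2) * ∑' n, g n ^ 2 := by
      calc (∑ n ∈ s, f n * g n) ^ 2 ≤ (∑ n ∈ s, f n ^ 2) * ∑ n ∈ s, g n ^ 2 := h1
        _ ≤ (∑' n, f n ^ 2) * ∑' n, g n ^ 2 := by
            apply mul_le_mul h2 h3 (Finset.sum_nonneg fun n _ => sq_nonneg _) hA
    have h5 : (0 : ℝ) ≤ ∑ n ∈ s, f n * g n :=
      Finset.sum_nonneg fun n _ => mul_nonneg (hf n) (hg n)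
    calc ∑ n ∈ s, f n * g n = Real.sqrt ((∑ n ∈ s, f n * g n) ^ 2) := by
          rw [Real.sqrt_sq h5]
      _ ≤ Real.sqrt ((∑' n, f n ^ 2) * ∑' n, g n ^ 2) := Real.sqrt_le_sqrt h4
  have h6 : (0 : ℝ) ≤ ∑' n, f n * g n :=
    tsum_nonneg fun n => mul_nonneg (hf n) (hg n)
  calc (∑' n, f n * g n) ^ 2 ≤ Real.sqrt ((∑' n, f n ^ 2) * ∑' n, g n ^ 2) ^ 2 := by
        apply pow_le_pow_left₀ h6 key
    _ = (∑' n, f n ^ 2) * ∑' n, g n ^ 2 := Real.sq_sqrt (mul_nonneg hA hB)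

/-- The key pointwise inequality on the series coefficients. -/
lemma c_key {q ν : ℝ} (hq : 0 < q) (hν : 1 / 2 < ν) (n : ℕ) :
    ν * c q ν n ^ 2 ≤ (ν + 1) * (c q (ν - 1) n * c q (ν + 1) n) := by
  have hy : (0 : ℝ) < (n : ℝ) + ν := by
    have : (0 : ℝ) ≤ n := n.cast_nonneg
    linarith
  have hΓ : (0 : ℝ) < Real.Gamma ((n : ℝ) + ν) := Real.Gamma_pos_of_pos hy
  have hfac : (0 : ℝ) < (n.factorial : ℝ) := by exact_mod_cast n.factorial_pos
  have e1 : (n : ℝ) + (ν - 1) + 1 = (n : ℝ) + ν := by ring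
  have e2 : (n : ℝ) + ν + 1 = ((n : ℝ) + ν) + 1 := by ring
  have e3 : (n : ℝ) + (ν + 1) + 1 = (((n : ℝ) + ν) + 1) + 1 := by ring
  have g2 : Real.Gamma ((n : ℝ) + ν + 1) = ((n : ℝ) + ν) * Real.Gamma ((n : ℝ) + ν) := by
    rw [e2, Real.Gamma_add_one hy.ne']
  have g3 : Real.Gamma ((n : ℝ) + (ν + 1) + 1) =
      (((n : ℝ) + ν) + 1) * (((n : ℝ) + ν) * Real.Gamma ((n : ℝ) + ν)) := by
    rw [e3, Real.Gamma_add_one (by linarith), e2, Real.Gamma_add_one hy.ne']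
  unfold c
  rw [e1, g2, g3]
  have hqn : (0 : ℝ) < q ^ n := pow_pos hq n
  have hn0 : (0 : ℝ) ≤ (n : ℝ) := n.cast_nonneg
  rw [div_pow, div_mul_div_comm, ← mul_div_assoc, ← mul_div_assoc,
    div_le_div_iff₀ (by positivity) (by positivity)]
  have hkey : (0:ℝ) ≤ q ^ n * q ^ n * ((n.factorial:ℝ) * (n.factorial:ℝ)) *
      (Real.Gamma ((n:ℝ) + ν) * Real.Gamma ((n:ℝ) + ν)) * (((n:ℝ) + ν) * (n:ℝ)) := by
    positivity
  nlinarith [hkey]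

/-- Turán-type inequality for the modified Bessel function of the first kind. -/
lemma turanI {ν x : ℝ} (hν : 1 / 2 < ν) (hx : 0 < x) :
    ν * besselI ν x ^ 2 ≤ (ν + 1) * (besselI (ν - 1) x * besselI (ν + 1) x) := by
  have hx2 : (0 : ℝ) < x / 2 := by linarith
  have hq : (0 : ℝ) < (x / 2) ^ 2 := by positivity
  set q : ℝ := (x / 2) ^ 2 with hqdef
  have hν0 : (0 : ℝ) < ν := by linarith
  have hm : -(1 : ℝ) / 2 < ν - 1 := by linarith
  have h0 : -(1 : ℝ) / 2 < ν := by linarith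
  have hp : -(1 : ℝ) / 2 < ν + 1 := by linarith
  set f : ℕ → ℝ := fun n => Real.sqrt (c q (ν - 1) n) with hf
  set g : ℕ → ℝ := fun n => Real.sqrt (c q (ν + 1) n) with hg
  have hf2 : ∀ n, f n ^ 2 = c q (ν - 1) n := fun n => Real.sq_sqrt (c_pos hq hm n).le
  have hg2 : ∀ n, g n ^ 2 = c q (ν + 1) n := fun n => Real.sq_sqrt (c_pos hq hp n).le
  have hsf2 : Summable fun n => f n ^ 2 := by
    simp only [hf2]; exact summable_c hq hm
  have hsg2 : Summable fun n => g n ^ 2 := by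
    simp only [hg2]; exact summable_c hq hp
  have hfg : Summable fun n => f n * g n := by
    apply Summable.of_nonneg_of_le (fun n => mul_nonneg (Real.sqrt_nonneg _) (Real.sqrt_nonneg _))
      (fun n => ?_) ((hsf2.add hsg2).div_const 2)
    have h := sq_nonneg (f n - g n)
    nlinarith [hf2 n, hg2 n]
  -- pointwise bound
  have hpt : ∀ n, c q ν n ≤ Real.sqrt ((ν + 1) / ν) * (f n * g n) := by
    intro n
    have h1 := c_key hq hν n
    have h2 : c q ν n ^ 2 ≤ ((ν + 1) / ν) * (c q (ν - 1) n * c q (ν + 1) n) := by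
      rw [div_mul_eq_mul_div, le_div_iff₀ hν0]
      nlinarith
    calc c q ν n = Real.sqrt (c q ν n ^ 2) := (Real.sqrt_sq (c_pos hq h0 n).le).symm
      _ ≤ Real.sqrt (((ν + 1) / ν) * (c q (ν - 1) n * c q (ν + 1) n)) := Real.sqrt_le_sqrt h2
      _ = Real.sqrt ((ν + 1) / ν) * (f n * g n) := by
          rw [Real.sqrt_mul (by positivity), Real.sqrt_mul (c_pos hq hm n).le]
  have hTν : ∑' n, c q ν n ≤ Real.sqrt ((ν + 1) / ν) * ∑' n, f n * g n := by
    rw [← tsum_mul_left]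
    exact Summable.tsum_le_tsum hpt (summable_c hq h0) (hfg.mul_left _)
  have hCS := tsum_cauchy_schwarz (f := f) (g := g)
    (fun n => Real.sqrt_nonneg _) (fun n => Real.sqrt_nonneg _) hsf2 hsg2
  have hTm : (∑' n, f n ^ 2) = ∑' n, c q (ν - 1) n := by
    congr 1; funext n; exact hf2 n
  have hTp : (∑' n, g n ^ 2) = ∑' n, c q (ν + 1) n := by
    congr 1; funext n; exact hg2 n
  rw [hTm, hTp] at hCS
  -- combine
  have hTν0 : (0 : ℝ) ≤ ∑' n, c q ν n := tsum_nonneg fun n => (c_pos hq h0 n).le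
  have hfg0 : (0 : ℝ) ≤ ∑' n, f n * g n :=
    tsum_nonneg fun n => mul_nonneg (Real.sqrt_nonneg _) (Real.sqrt_nonneg _)
  have hsq : (∑' n, c q ν n) ^ 2 ≤
      ((ν + 1) / ν) * ((∑' n, c q (ν - 1) n) * ∑' n, c q (ν + 1) n) := by
    have h1 : (∑' n, c q ν n) ^ 2 ≤
        (Real.sqrt ((ν + 1) / ν) * ∑' n, f n * g n) ^ 2 := by
      apply pow_le_pow_left₀ hTν0 hTν
    have h2 : (Real.sqrt ((ν + 1) / ν) * ∑' n, f n * g n) ^ 2 =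
        ((ν + 1) / ν) * (∑' n, f n * g n) ^ 2 := by
      rw [mul_pow, Real.sq_sqrt (by positivity)]
    have h3 : ((ν + 1) / ν) * (∑' n, f n * g n) ^ 2 ≤
        ((ν + 1) / ν) * ((∑' n, c q (ν - 1) n) * ∑' n, c q (ν + 1) n) := by
      apply mul_le_mul_of_nonneg_left hCS (by positivity)
    linarith
  -- restore the rpow prefactors
  rw [besselI_eq (μ := ν) hx, besselI_eq (μ := ν - 1) hx, besselI_eq (μ := ν + 1) hx]
  have hrw : (x / 2) ^ (ν - 1) * (x / 2) ^ (ν + 1) = ((x / 2) ^ ν) ^ 2 := by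
    rw [← Real.rpow_add hx2, ← Real.rpow_natCast ((x / 2) ^ ν) 2, ← Real.rpow_mul hx2.le]
    norm_num
    congr 1
    ring
  have hP : (0 : ℝ) < ((x / 2) ^ ν : ℝ) ^ 2 := by positivity
  calc ν * ((x / 2) ^ ν * ∑' n, c q ν n) ^ 2
      = ((x / 2) ^ ν) ^ 2 * (ν * (∑' n, c q ν n) ^ 2) := by ring
    _ ≤ ((x / 2) ^ ν) ^ 2 * ((ν + 1) * ((∑' n, c q (ν - 1) n) * ∑' n, c q (ν + 1) n)) := by
        apply mul_le_mul_of_nonneg_left _ hP.le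
        have : ν * (∑' n, c q ν n) ^ 2 ≤
            ν * (((ν + 1) / ν) * ((∑' n, c q (ν - 1) n) * ∑' n, c q (ν + 1) n)) :=
          mul_le_mul_of_nonneg_left hsq hν0.le
        calc ν * (∑' n, c q ν n) ^ 2
            ≤ ν * (((ν + 1) / ν) * ((∑' n, c q (ν - 1) n) * ∑' n, c q (ν + 1) n)) := this
          _ = (ν + 1) * ((∑' n, c q (ν - 1) n) * ∑' n, c q (ν + 1) n) := by
              field_simp
    _ = (ν + 1) * ((x / 2) ^ (ν - 1) * (∑' n, c q (ν - 1) n) *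
        ((x / 2) ^ (ν + 1) * ∑' n, c q (ν + 1) n)) := by
        rw [← hrw]; ring

/-- The integrand of `besselK`. -/
noncomputable def kker (μ x : ℝ) (t : ℝ) : ℝ := Real.exp (-x * Real.cosh t) * Real.cosh (μ * t)

lemma kker_pos (μ x t : ℝ) : 0 < kker μ x t :=
  mul_pos (Real.exp_pos _) (lt_of_lt_of_le one_pos (Real.one_le_cosh _))

lemma cosh_le_exp_abs (y : ℝ) : Real.cosh y ≤ Real.exp |y| := by
  rw [Real.cosh_eq]
  have h1 : Real.exp y ≤ Real.exp |y| := Real.exp_le_exp.2 (le_abs_self y)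
  have h2 : Real.exp (-y) ≤ Real.exp |y| := Real.exp_le_exp.2 (neg_le_abs y)
  linarith

lemma integrable_kker {μ x : ℝ} (hx : 0 < x) : IntegrableOn (kker μ x) (Ioi 0) := by
  apply integrable_of_isBigO_exp_neg (a := 0) (b := 1) one_pos
  · exact (((Real.continuous_exp.comp (continuous_const.mul Real.continuous_cosh)).mul
      (Real.continuous_cosh.comp (continuous_const.mul continuous_id)))).continuousOn
  · rw [Asymptotics.isBigO_iff]
    refine ⟨1, ?_⟩
    have hev : ∀ᶠ t : ℝ in atTop, Real.exp t / t ≥ 2 * (|μ| + 1) / x := by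
      have := (Real.tendsto_exp_div_pow_atTop 1).eventually_ge_atTop (2 * (|μ| + 1) / x)
      simpa using this
    filter_upwards [hev, eventually_ge_atTop (1 : ℝ)] with t hexp ht1
    have ht0 : (0 : ℝ) < t := lt_of_lt_of_le one_pos ht1
    have hcosh : Real.exp t / 2 ≤ Real.cosh t := by
      rw [Real.cosh_eq]
      have := (Real.exp_pos (-t)).le
      linarith
    have h1 : (|μ| + 1) * t ≤ x * Real.cosh t := by
      rw [ge_iff_le, div_le_div_iff₀ hx ht0] at hexp
      nlinarith [hcosh, hx.le, hexp]
    have hch : Real.cosh (μ * t) ≤ Real.exp (|μ| * t) := by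
      calc Real.cosh (μ * t) ≤ Real.exp |μ * t| := cosh_le_exp_abs _
        _ = Real.exp (|μ| * t) := by rw [abs_mul, abs_of_pos ht0]
    have hbound : kker μ x t ≤ Real.exp (-t) := by
      unfold kker
      calc Real.exp (-x * Real.cosh t) * Real.cosh (μ * t)
          ≤ Real.exp (-x * Real.cosh t) * Real.exp (|μ| * t) := by
            apply mul_le_mul_of_nonneg_left hch (Real.exp_pos _).le
        _ = Real.exp (|μ| * t - x * Real.cosh t) := by rw [← Real.exp_add]; ring_nf
        _ ≤ Real.exp (-t) := by
            apply Real.exp_le_exp.2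
            nlinarith [h1]
    rw [Real.norm_of_nonneg (kker_pos μ x t).le, Real.norm_of_nonneg (Real.exp_pos _).le]
    simpa using hbound

lemma besselK_pos {μ x : ℝ} (hx : 0 < x) : 0 < besselK μ x := by
  rw [besselK]
  have hsupp : (Function.support fun t => Real.exp (-x * Real.cosh t) * Real.cosh (μ * t)) ∩
      Ioi 0 = Ioi 0 := by
    rw [inter_eq_right]
    intro t _
    exact (kker_pos μ x t).ne'
  rw [setIntegral_pos_iff_support_of_nonneg_ae]
  · rw [hsupp, Real.volume_Ioi]
    exact ENNReal.zero_lt_top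
  · exact Filter.Eventually.of_forall fun t => (kker_pos μ x t).le
  · exact integrable_kker hx

/-- Log-convexity (in the order) of `besselK` in the parameter: `K_ν² ≤ K_{ν-1} K_{ν+1}`. -/
lemma turanK {ν x : ℝ} (hx : 0 < x) :
    besselK ν x ^ 2 ≤ besselK (ν - 1) x * besselK (ν + 1) x := by
  have hm := integrable_kker (μ := ν - 1) (x := x) hx
  have hp := integrable_kker (μ := ν + 1) (x := x) hx
  have h0 := integrable_kker (μ := ν) (x := x) hx
  set f : ℝ → ℝ := fun t => Real.sqrt (kker (ν - 1) x t) with hfdef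
  set g : ℝ → ℝ := fun t => Real.sqrt (kker (ν + 1) x t) with hgdef
  have hf2 : ∀ t, f t ^ 2 = kker (ν - 1) x t := fun t => Real.sq_sqrt (kker_pos _ _ t).le
  have hg2 : ∀ t, g t ^ 2 = kker (ν + 1) x t := fun t => Real.sq_sqrt (kker_pos _ _ t).le
  -- pointwise: kker ν x t ≤ f t * g t
  have hpt : ∀ t : ℝ, kker ν x t ≤ f t * g t := by
    intro t
    have hcosh : Real.cosh (ν * t) ^ 2 ≤ Real.cosh ((ν - 1) * t) * Real.cosh ((ν + 1) * t) := by
      have e1 : (ν - 1) * t = ν * t - t := by ring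
      have e2 : (ν + 1) * t = ν * t + t := by ring
      rw [e1, e2, Real.cosh_sub, Real.cosh_add]
      have hs := Real.sinh_sq (ν * t)
      have hs2 := Real.sinh_sq t
      have h1 : (1 : ℝ) ≤ Real.cosh t := Real.one_le_cosh t
      nlinarith [sq_nonneg (Real.sinh (ν * t)), sq_nonneg (Real.sinh t)]
    have hk2 : kker ν x t ^ 2 ≤ (f t * g t) ^ 2 := by
      rw [mul_pow, hf2, hg2]
      unfold kker
      have he : (0 : ℝ) < Real.exp (-x * Real.cosh t) := Real.exp_pos _
      calc (Real.exp (-x * Real.cosh t) * Real.cosh (ν * t)) ^ 2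
          = Real.exp (-x * Real.cosh t) ^ 2 * Real.cosh (ν * t) ^ 2 := by ring
        _ ≤ Real.exp (-x * Real.cosh t) ^ 2 *
            (Real.cosh ((ν - 1) * t) * Real.cosh ((ν + 1) * t)) := by
            apply mul_le_mul_of_nonneg_left hcosh (by positivity)
        _ = Real.exp (-x * Real.cosh t) * Real.cosh ((ν - 1) * t) *
            (Real.exp (-x * Real.cosh t) * Real.cosh ((ν + 1) * t)) := by ring
    have hfg0 : 0 ≤ f t * g t := mul_nonneg (Real.sqrt_nonneg _) (Real.sqrt_nonneg _)
    nlinarith [kker_pos ν x t, hk2]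
  -- integrability of f * g
  have hmeas : ∀ μ : ℝ, Continuous (kker μ x) := fun μ =>
    (Real.continuous_exp.comp (continuous_const.mul Real.continuous_cosh)).mul
      (Real.continuous_cosh.comp (continuous_const.mul continuous_id))
  have hfcont : Continuous f := Real.continuous_sqrt.comp (hmeas (ν - 1))
  have hgcont : Continuous g := Real.continuous_sqrt.comp (hmeas (ν + 1))
  have hfgint : IntegrableOn (fun t => f t * g t) (Ioi 0) := by
    apply Integrable.mono ((hm.add hp).div_const 2) ((hfcont.mul hgcont).aestronglyMeasurable.restrict)
    apply Filter.Eventually.of_forall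
    intro t
    have h1 : 0 ≤ f t * g t := mul_nonneg (Real.sqrt_nonneg _) (Real.sqrt_nonneg _)
    have h2 : f t * g t ≤ (kker (ν - 1) x t + kker (ν + 1) x t) / 2 := by
      nlinarith [sq_nonneg (f t - g t), hf2 t, hg2 t, hpt t]
    have h3 : (0:ℝ) ≤ (kker (ν - 1) x t + kker (ν + 1) x t) / 2 := by
      have := kker_pos (ν - 1) x t
      have := kker_pos (ν + 1) x t
      linarith
    simp only [Pi.add_apply, Pi.mul_apply]
    rw [Real.norm_of_nonneg h1, Real.norm_of_nonneg h3]
    exact h2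
  -- step 1: K_ν ≤ ∫ f g
  have step1 : besselK ν x ≤ ∫ t in Ioi (0 : ℝ), f t * g t := by
    rw [besselK]
    apply integral_mono_of_nonneg (Filter.Eventually.of_forall fun t => (kker_pos ν x t).le)
      hfgint (Filter.Eventually.of_forall fun t => hpt t)
  -- step 2: Hölder (Cauchy–Schwarz)
  have hconj : Real.HolderConjugate 2 2 := by
    constructor <;> norm_num
  have hfmem : MemLp f (ENNReal.ofReal 2) (volume.restrict (Ioi (0:ℝ))) := by
    rw [show ENNReal.ofReal 2 = 2 by norm_num]
    rw [memLp_two_iff_integrable_sq hfcont.aestronglyMeasurable.restrict]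
    exact hm.congr (Filter.Eventually.of_forall fun t => (hf2 t).symm)
  have hgmem : MemLp g (ENNReal.ofReal 2) (volume.restrict (Ioi (0:ℝ))) := by
    rw [show ENNReal.ofReal 2 = 2 by norm_num]
    rw [memLp_two_iff_integrable_sq hgcont.aestronglyMeasurable.restrict]
    exact hp.congr (Filter.Eventually.of_forall fun t => (hg2 t).symm)
  have step2 := integral_mul_le_Lp_mul_Lq_of_nonneg hconj
    (Filter.Eventually.of_forall fun t => Real.sqrt_nonneg _)
    (Filter.Eventually.of_forall fun t => Real.sqrt_nonneg _) hfmem hgmem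
  have hf2int : ∫ t in Ioi (0:ℝ), f t ^ (2:ℝ) = besselK (ν - 1) x := by
    rw [besselK]
    apply integral_congr_ae
    apply Filter.Eventually.of_forall
    intro t
    show f t ^ (2:ℝ) = _
    rw [show (2:ℝ) = ((2:ℕ):ℝ) by norm_num, Real.rpow_natCast]
    exact hf2 t
  have hg2int : ∫ t in Ioi (0:ℝ), g t ^ (2:ℝ) = besselK (ν + 1) x := by
    rw [besselK]
    apply integral_congr_ae
    apply Filter.Eventually.of_forall
    intro t
    show g t ^ (2:ℝ) = _
    rw [show (2:ℝ) = ((2:ℕ):ℝ) by norm_num, Real.rpow_natCast]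
    exact hg2 t
  rw [hf2int, hg2int] at step2
  -- combine
  have hKν : 0 < besselK ν x := besselK_pos hx
  have hKm : 0 < besselK (ν - 1) x := besselK_pos hx
  have hKp : 0 < besselK (ν + 1) x := besselK_pos hx
  have hend : besselK ν x ≤ besselK (ν - 1) x ^ ((1:ℝ)/2) * besselK (ν + 1) x ^ ((1:ℝ)/2) :=
    le_trans step1 step2
  have hsq : (besselK (ν - 1) x ^ ((1:ℝ)/2) * besselK (ν + 1) x ^ ((1:ℝ)/2)) ^ 2 =
      besselK (ν - 1) x * besselK (ν + 1) x := by
    rw [mul_pow, ← Real.rpow_natCast (besselK (ν - 1) x ^ ((1:ℝ)/2)) 2,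
      ← Real.rpow_natCast (besselK (ν + 1) x ^ ((1:ℝ)/2)) 2,
      ← Real.rpow_mul hKm.le, ← Real.rpow_mul hKp.le]
    norm_num
  calc besselK ν x ^ 2
      ≤ (besselK (ν - 1) x ^ ((1:ℝ)/2) * besselK (ν + 1) x ^ ((1:ℝ)/2)) ^ 2 :=
        pow_le_pow_left₀ hKν.le hend 2
    _ = besselK (ν - 1) x * besselK (ν + 1) x := hsq

end Turan15Aux

theorem stmt15 (ν x : ℝ) (hν : 1 / 2 < ν) (hx : 0 < x) :
    (besselI ν x * besselK ν x) ^ 2 -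
        (besselI (ν - 1) x * besselK (ν - 1) x) * (besselI (ν + 1) x * besselK (ν + 1) x) <
      (besselI ν x * besselK ν x) ^ 2 / (ν + 1 / 2) := by
  have hν0 : (0 : ℝ) < ν := by linarith
  have hb : 0 < besselI ν x := Turan15Aux.besselI_pos hx (by linarith)
  have ha : 0 < besselI (ν - 1) x := Turan15Aux.besselI_pos hx (by linarith)
  have hc : 0 < besselI (ν + 1) x := Turan15Aux.besselI_pos hx (by linarith)
  have hB : 0 < besselK ν x := Turan15Aux.besselK_pos hx
  have hA : 0 < besselK (ν - 1) x := Turan15Aux.besselK_pos hx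
  have hC : 0 < besselK (ν + 1) x := Turan15Aux.besselK_pos hx
  have hI := Turan15Aux.turanI hν hx
  have hK := Turan15Aux.turanK (ν := ν) hx
  set a := besselI (ν - 1) x
  set b := besselI ν x
  set c := besselI (ν + 1) x
  set A := besselK (ν - 1) x
  set B := besselK ν x
  set C := besselK (ν + 1) x
  -- key: ν * b^2 * B^2 ≤ (ν+1) * (a*c) * (A*C)
  have h1 : ν * b ^ 2 * B ^ 2 ≤ (ν + 1) * (a * c) * (A * C) := by
    have s1 : ν * b ^ 2 * B ^ 2 ≤ (ν + 1) * (a * c) * B ^ 2 :=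
      mul_le_mul_of_nonneg_right hI (sq_nonneg B)
    have s2 : (ν + 1) * (a * c) * B ^ 2 ≤ (ν + 1) * (a * c) * (A * C) := by
      apply mul_le_mul_of_nonneg_left hK
      positivity
    linarith
  have hd : (0 : ℝ) < ν + 1 / 2 := by linarith
  rw [lt_div_iff₀ hd]
  have hbB : (0 : ℝ) < b ^ 2 * B ^ 2 := by positivity
  nlinarith [h1, hbB, mul_pos (mul_pos ha hc) (mul_pos hA hC)]
end

section
/- For all ν > 0 and x > 0, P_ν²(x) - P_{ν-1}(x) P_{ν+1}(x) < P_ν²(x) / (ν + 1), where P_ν(x) = I_ν(x) K_ν(x). -/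
open Real MeasureTheory Set Filter

namespace Stmt16Aux

/-- the `n`-th term of the Bessel-I series -/
noncomputable def iterm (μ x : ℝ) (n : ℕ) : ℝ :=
  (x / 2) ^ (2 * (n : ℝ) + μ) / ((n.factorial : ℝ) * Real.Gamma ((n : ℝ) + μ + 1))

lemma iterm_pos {μ x : ℝ} (hμ : -1 < μ) (hx : 0 < x) (n : ℕ) : 0 < iterm μ x n := by
  have h1 : (0:ℝ) < x / 2 := by linarith
  have h2 : (0:ℝ) < (n : ℝ) + μ + 1 := by
    have : (0:ℝ) ≤ (n : ℝ) := Nat.cast_nonneg n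
    linarith
  exact div_pos (Real.rpow_pos_of_pos h1 _)
    (mul_pos (by exact_mod_cast n.factorial_pos) (Real.Gamma_pos_of_pos h2))

lemma iterm_succ {μ x : ℝ} (hμ : -1 < μ) (hx : 0 < x) (n : ℕ) :
    iterm μ x (n + 1) = iterm μ x n * ((x / 2) ^ 2 / (((n : ℝ) + 1) * ((n : ℝ) + μ + 1))) := by
  have h1 : (0:ℝ) < x / 2 := by linarith
  have h2 : (0:ℝ) < (n : ℝ) + μ + 1 := by
    have : (0:ℝ) ≤ (n : ℝ) := Nat.cast_nonneg n
    linarith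
  have hg : Real.Gamma ((↑(n + 1) : ℝ) + μ + 1) = ((n : ℝ) + μ + 1) * Real.Gamma ((n : ℝ) + μ + 1) := by
    have e : ((↑(n + 1) : ℝ) + μ + 1) = ((n : ℝ) + μ + 1) + 1 := by push_cast; ring
    rw [e, Real.Gamma_add_one (ne_of_gt h2)]
  have hp : (x / 2) ^ (2 * ((↑(n + 1)) : ℝ) + μ) = (x / 2) ^ (2 * (n : ℝ) + μ) * (x / 2) ^ 2 := by
    rw [show (2 * ((↑(n + 1)) : ℝ) + μ) = (2 * (n : ℝ) + μ) + ((2 : ℕ) : ℝ) by push_cast; ring,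
      Real.rpow_add h1, Real.rpow_natCast]
  have hG : Real.Gamma ((n : ℝ) + μ + 1) ≠ 0 := ne_of_gt (Real.Gamma_pos_of_pos h2)
  have hF : ((n.factorial : ℝ)) ≠ 0 := by exact_mod_cast n.factorial_pos.ne'
  simp only [iterm, hg, hp, Nat.factorial_succ, Nat.cast_mul]
  push_cast
  field_simp

lemma iterm_summable {μ x : ℝ} (hμ : -1 < μ) (hx : 0 < x) : Summable (iterm μ x) := by
  apply summable_of_ratio_norm_eventually_le (r := 1/2) (by norm_num)
  have h1 : (0:ℝ) < x / 2 := by linarith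
  have hev : ∀ᶠ n : ℕ in atTop, ((x / 2) ^ 2 * 2 ≤ (n : ℝ) + 1) ∧ (0 ≤ (n : ℝ) + μ + 1 - 1) := by
    obtain ⟨N, hN⟩ := exists_nat_ge (max ((x / 2) ^ 2 * 2) (-μ))
    filter_upwards [eventually_ge_atTop N] with n hn
    have h2 : (N : ℝ) ≤ (n : ℝ) := by exact_mod_cast hn
    constructor
    · have := le_trans (le_max_left ((x / 2) ^ 2 * 2) (-μ)) hN
      linarith
    · have := le_trans (le_max_right ((x / 2) ^ 2 * 2) (-μ)) hN
      linarith
  filter_upwards [hev] with n hn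
  obtain ⟨hn1, hn2⟩ := hn
  have hpos := iterm_pos hμ hx n
  have hpos' := iterm_pos hμ hx (n + 1)
  rw [Real.norm_of_nonneg hpos.le, Real.norm_of_nonneg hpos'.le, iterm_succ hμ hx n]
  have hfac : (x / 2) ^ 2 / (((n : ℝ) + 1) * ((n : ℝ) + μ + 1)) ≤ 1 / 2 := by
    rw [div_le_div_iff₀ (by nlinarith) (by norm_num)]
    nlinarith [sq_nonneg (x / 2)]
  calc iterm μ x n * ((x / 2) ^ 2 / (((n : ℝ) + 1) * ((n : ℝ) + μ + 1)))
      ≤ iterm μ x n * (1 / 2) := by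
        exact mul_le_mul_of_nonneg_left hfac hpos.le
    _ = 1 / 2 * iterm μ x n := by ring

lemma besselI_eq (μ x : ℝ) : besselI μ x = ∑' n, iterm μ x n := rfl

lemma besselI_pos {μ x : ℝ} (hμ : -1 < μ) (hx : 0 < x) : 0 < besselI μ x := by
  rw [besselI_eq]
  exact Summable.tsum_pos (iterm_summable hμ hx) (fun n => (iterm_pos hμ hx n).le) 0 (iterm_pos hμ hx 0)

lemma iterm_summable_norm {μ x : ℝ} (hμ : -1 < μ) (hx : 0 < x) :
    Summable fun n => ‖iterm μ x n‖ :=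
  (iterm_summable hμ hx).congr fun n => (Real.norm_of_nonneg (iterm_pos hμ hx n).le).symm

lemma besselI_mul {a b x : ℝ} (ha : -1 < a) (hb : -1 < b) (hx : 0 < x) :
    besselI a x * besselI b x =
      ∑' n : ℕ, ∑ k ∈ Finset.range (n + 1), iterm a x k * iterm b x (n - k) := by
  rw [besselI_eq, besselI_eq]
  exact tsum_mul_tsum_eq_tsum_sum_range_of_summable_norm (iterm_summable_norm ha hx)
    (iterm_summable_norm hb hx)

lemma summable_cauchy {a b x : ℝ} (ha : -1 < a) (hb : -1 < b) (hx : 0 < x) :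
    Summable fun n : ℕ => ∑ k ∈ Finset.range (n + 1), iterm a x k * iterm b x (n - k) :=
  (summable_norm_sum_mul_range_of_summable_norm (iterm_summable_norm ha hx)
    (iterm_summable_norm hb hx)).of_norm

/-- the scalar inequality behind the Turán-type inequality -/
lemma scalar {ν p q : ℝ} (hν : 0 < ν) (hp : ν ≤ p) (hq : ν ≤ q) :
    2 * ν / (p * q) ≤ (ν + 1) * (1 / ((q + 1) * q) + 1 / ((p + 1) * p)) := by
  have hp0 : 0 < p := lt_of_lt_of_le hν hp
  have hq0 : 0 < q := lt_of_lt_of_le hν hq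
  rw [div_add_div _ _ (by positivity) (by positivity), ← mul_div_assoc,
    div_le_div_iff₀ (by positivity) (by positivity)]
  nlinarith [mul_nonneg (mul_nonneg hp0.le (sub_nonneg.2 hp)) (mul_pos hp0 hq0).le,
    mul_nonneg (mul_nonneg hq0.le (sub_nonneg.2 hq)) (mul_pos hp0 hq0).le,
    mul_nonneg (sub_nonneg.2 hp) (mul_pos hp0 hq0).le,
    mul_nonneg (sub_nonneg.2 hq) (mul_pos hp0 hq0).le,
    mul_nonneg (mul_nonneg hν.le (sq_nonneg (p - q))) (mul_pos hp0 hq0).le]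

lemma pointwise {ν x : ℝ} (hν : 0 < ν) (hx : 0 < x) (k m : ℕ) :
    2 * ν * (iterm ν x k * iterm ν x m) ≤
      (ν + 1) * (iterm (ν - 1) x k * iterm (ν + 1) x m
        + iterm (ν - 1) x m * iterm (ν + 1) x k) := by
  have h1 : (0:ℝ) < x / 2 := by linarith
  set p : ℝ := (k : ℝ) + ν with hpdef
  set q : ℝ := (m : ℝ) + ν with hqdef
  have hp : ν ≤ p := by simp [hpdef]
  have hq : ν ≤ q := by simp [hqdef]
  have hp0 : (0:ℝ) < p := lt_of_lt_of_le hν hp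
  have hq0 : (0:ℝ) < q := lt_of_lt_of_le hν hq
  set gp : ℝ := Real.Gamma p with hgp
  set gq : ℝ := Real.Gamma q with hgq
  have hgp0 : 0 < gp := Real.Gamma_pos_of_pos hp0
  have hgq0 : 0 < gq := Real.Gamma_pos_of_pos hq0
  have e1 : iterm ν x k = (x / 2) ^ (2 * (k : ℝ) + ν) / ((k.factorial : ℝ) * (p * gp)) := by
    rw [iterm, show ((k : ℝ) + ν + 1) = p + 1 by rw [hpdef], Real.Gamma_add_one hp0.ne']
  have e2 : iterm ν x m = (x / 2) ^ (2 * (m : ℝ) + ν) / ((m.factorial : ℝ) * (q * gq)) := by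
    rw [iterm, show ((m : ℝ) + ν + 1) = q + 1 by rw [hqdef], Real.Gamma_add_one hq0.ne']
  have e3 : iterm (ν - 1) x k = (x / 2) ^ (2 * (k : ℝ) + (ν - 1)) / ((k.factorial : ℝ) * gp) := by
    rw [iterm, show ((k : ℝ) + (ν - 1) + 1) = p by rw [hpdef]; ring]
  have e3' : iterm (ν - 1) x m = (x / 2) ^ (2 * (m : ℝ) + (ν - 1)) / ((m.factorial : ℝ) * gq) := by
    rw [iterm, show ((m : ℝ) + (ν - 1) + 1) = q by rw [hqdef]; ring]
  have e4 : iterm (ν + 1) x m =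
      (x / 2) ^ (2 * (m : ℝ) + (ν + 1)) / ((m.factorial : ℝ) * ((q + 1) * (q * gq))) := by
    rw [iterm, show ((m : ℝ) + (ν + 1) + 1) = (q + 1) + 1 by rw [hqdef]; ring,
      Real.Gamma_add_one (by positivity), show (q + 1 : ℝ) = q + 1 from rfl,
      Real.Gamma_add_one hq0.ne']
  have e4' : iterm (ν + 1) x k =
      (x / 2) ^ (2 * (k : ℝ) + (ν + 1)) / ((k.factorial : ℝ) * ((p + 1) * (p * gp))) := by
    rw [iterm, show ((k : ℝ) + (ν + 1) + 1) = (p + 1) + 1 by rw [hpdef]; ring,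
      Real.Gamma_add_one (by positivity), Real.Gamma_add_one hp0.ne']
  rw [e1, e2, e3, e3', e4, e4', div_mul_div_comm, div_mul_div_comm, div_mul_div_comm,
    ← Real.rpow_add h1, ← Real.rpow_add h1, ← Real.rpow_add h1]
  set E : ℝ := 2 * (k : ℝ) + 2 * (m : ℝ) + 2 * ν with hE
  rw [show (2 * (k : ℝ) + ν + (2 * (m : ℝ) + ν)) = E by rw [hE]; ring,
    show (2 * (k : ℝ) + (ν - 1) + (2 * (m : ℝ) + (ν + 1))) = E by rw [hE]; ring,
    show (2 * (m : ℝ) + (ν - 1) + (2 * (k : ℝ) + (ν + 1))) = E by rw [hE]; ring]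
  have hP : (0:ℝ) < (x / 2) ^ E := Real.rpow_pos_of_pos h1 _
  have hfk : (0:ℝ) < (k.factorial : ℝ) := by exact_mod_cast k.factorial_pos
  have hfm : (0:ℝ) < (m.factorial : ℝ) := by exact_mod_cast m.factorial_pos
  have main := mul_le_mul_of_nonneg_right (scalar hν hp hq)
    (le_of_lt (show (0:ℝ) < (x / 2) ^ E / ((k.factorial : ℝ) * (m.factorial : ℝ) * gp * gq)
      by positivity))
  have hfk' : (k.factorial : ℝ) ≠ 0 := hfk.ne'
  have hfm' : (m.factorial : ℝ) ≠ 0 := hfm.ne'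
  have hgp' : gp ≠ 0 := hgp0.ne'
  have hgq' : gq ≠ 0 := hgq0.ne'
  have hp' : p ≠ 0 := hp0.ne'
  have hq' : q ≠ 0 := hq0.ne'
  have hp1 : p + 1 ≠ 0 := by positivity
  have hq1 : q + 1 ≠ 0 := by positivity
  convert main using 1
  · rfl
  · field_simp
  · field_simp

lemma coeff_le {ν x : ℝ} (hν : 0 < ν) (hx : 0 < x) (n : ℕ) :
    ν * ∑ k ∈ Finset.range (n + 1), iterm ν x k * iterm ν x (n - k) ≤
      (ν + 1) * ∑ k ∈ Finset.range (n + 1), iterm (ν - 1) x k * iterm (ν + 1) x (n - k) := by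
  have refl : ∑ k ∈ Finset.range (n + 1), iterm (ν - 1) x k * iterm (ν + 1) x (n - k)
      = ∑ k ∈ Finset.range (n + 1), iterm (ν - 1) x (n - k) * iterm (ν + 1) x k := by
    rw [← Finset.sum_range_reflect
      (fun k => iterm (ν - 1) x k * iterm (ν + 1) x (n - k)) (n + 1)]
    apply Finset.sum_congr rfl
    intro j hj
    have hj' : j ≤ n := Nat.lt_succ_iff.mp (Finset.mem_range.mp hj)
    simp only [Nat.add_sub_cancel, Nat.sub_sub_self hj']
  have hsum := Finset.sum_le_sum (s := Finset.range (n + 1))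
    (f := fun k => 2 * ν * (iterm ν x k * iterm ν x (n - k)))
    (g := fun k => (ν + 1) * (iterm (ν - 1) x k * iterm (ν + 1) x (n - k)
        + iterm (ν - 1) x (n - k) * iterm (ν + 1) x k))
    (fun k _ => pointwise hν hx k (n - k))
  rw [← Finset.mul_sum, ← Finset.mul_sum] at hsum
  rw [Finset.sum_add_distrib, ← refl] at hsum
  linarith

lemma strict_one {ν x : ℝ} (hν : 0 < ν) (hx : 0 < x) :
    ν * ∑ k ∈ Finset.range (1 + 1), iterm ν x k * iterm ν x (1 - k) <
      (ν + 1) * ∑ k ∈ Finset.range (1 + 1), iterm (ν - 1) x k * iterm (ν + 1) x (1 - k) := by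
  have h1 : (0:ℝ) < x / 2 := by linarith
  rw [Finset.sum_range_succ, Finset.sum_range_succ, Finset.sum_range_zero,
    Finset.sum_range_succ, Finset.sum_range_succ, Finset.sum_range_zero]
  set g : ℝ := Real.Gamma ν with hgdef
  have hg : 0 < g := Real.Gamma_pos_of_pos hν
  have G1 : Real.Gamma (ν + 1) = ν * g := Real.Gamma_add_one hν.ne'
  have G2 : Real.Gamma (ν + 1 + 1) = (ν + 1) * (ν * g) := by
    rw [Real.Gamma_add_one (by positivity), G1]
  have G3 : Real.Gamma (ν + 1 + 1 + 1) = (ν + 2) * ((ν + 1) * (ν * g)) := by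
    rw [Real.Gamma_add_one (by positivity), G2]; ring_nf
  simp only [iterm, Nat.cast_zero, Nat.cast_one, Nat.factorial_zero, Nat.factorial_one,
    Nat.sub_self, Nat.sub_zero, mul_zero, mul_one, zero_add, Nat.cast_ofNat]
  rw [show (ν - 1 + 1 : ℝ) = ν by ring, show ((1:ℝ) + ν + 1) = ν + 1 + 1 by ring,
    show ((1:ℝ) + (ν + 1) + 1) = ν + 1 + 1 + 1 by ring,
    show ((1:ℝ) + (ν - 1) + 1) = ν + 1 by ring, G1, G2, G3, ← hgdef,
    div_mul_div_comm, div_mul_div_comm, div_mul_div_comm, div_mul_div_comm,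
    ← Real.rpow_add h1, ← Real.rpow_add h1, ← Real.rpow_add h1, ← Real.rpow_add h1,
    show (ν + (2 + ν) : ℝ) = 2 + 2 * ν by ring,
    show ((2 + ν) + ν : ℝ) = 2 + 2 * ν by ring,
    show ((ν - 1) + (2 + (ν + 1)) : ℝ) = 2 + 2 * ν by ring,
    show ((2 + (ν - 1)) + (ν + 1) : ℝ) = 2 + 2 * ν by ring]
  set P : ℝ := (x / 2) ^ (2 + 2 * ν : ℝ) with hP
  have hP0 : 0 < P := Real.rpow_pos_of_pos h1 _
  have S : 2 * ν * (1 / ((1 * (ν * g)) * (1 * ((ν + 1) * (ν * g))))) <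
      (ν + 1) * (1 / ((1 * g) * (1 * ((ν + 2) * ((ν + 1) * (ν * g)))))
        + 1 / ((1 * (ν * g)) * (1 * ((ν + 1) * (ν * g))))) := by
    rw [div_add_div _ _ (by positivity) (by positivity), mul_one_div, ← mul_div_assoc,
      div_lt_div_iff₀ (by positivity) (by positivity)]
    nlinarith [mul_pos (mul_pos hg hg) hg, mul_pos hν hg, sq_nonneg g,
      mul_pos (mul_pos (mul_pos hg hg) hg) hν,
      mul_pos (mul_pos (mul_pos (mul_pos hg hg) hg) hν) hν,
      mul_pos (mul_pos (mul_pos (mul_pos (mul_pos hg hg) hg) hν) hν) hν]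
  have main := mul_lt_mul_of_pos_right S hP0
  convert main using 1
  · rfl
  · field_simp
    ring
  · field_simp
lemma cosh_le_exp_abs (y : ℝ) : Real.cosh y ≤ Real.exp |y| := by
  rw [Real.cosh_eq]
  have h1 : Real.exp y ≤ Real.exp |y| := Real.exp_le_exp.2 (le_abs_self y)
  have h2 : Real.exp (-y) ≤ Real.exp |y| := Real.exp_le_exp.2 (neg_le_abs y)
  linarith

lemma kf_cont (μ x : ℝ) : Continuous (fun t => Real.exp (-x * Real.cosh t) * Real.cosh (μ * t)) := by
  fun_prop

lemma kf_integrable (μ x : ℝ) (hx : 0 < x) :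
    IntegrableOn (fun t => Real.exp (-x * Real.cosh t) * Real.cosh (μ * t)) (Ioi 0) := by
  apply integrable_of_isBigO_exp_neg (a := 0) (b := 1) one_pos (kf_cont μ x).continuousOn
  apply Asymptotics.IsBigO.of_bound 1
  filter_upwards [eventually_ge_atTop (max 1 (4 * (|μ| + 1) / x))] with t ht
  have ht1 : (1:ℝ) ≤ t := le_trans (le_max_left _ _) ht
  have ht0 : (0:ℝ) ≤ t := by linarith
  have ht2 : 4 * (|μ| + 1) / x ≤ t := le_trans (le_max_right _ _) ht
  have hcosh : t ^ 2 / 4 ≤ Real.cosh t := by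
    have hexp : 1 + t + t ^ 2 / 2 ≤ Real.exp t := by
      have := Real.sum_le_exp_of_nonneg ht0 3
      simp [Finset.sum_range_succ, Nat.factorial] at this
      linarith
    rw [Real.cosh_eq]
    have : 0 < Real.exp (-t) := Real.exp_pos _
    linarith
  have hstep : (|μ| + 1) * t ≤ x * Real.cosh t := by
    have h4 : 4 * (|μ| + 1) ≤ x * t := by
      rw [div_le_iff₀ hx] at ht2; linarith [mul_comm x t]
    calc (|μ| + 1) * t = (4 * (|μ| + 1)) * t / 4 := by ring
      _ ≤ (x * t) * t / 4 := by
          have := mul_le_mul_of_nonneg_right h4 ht0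
          linarith
      _ = x * (t ^ 2 / 4) := by ring
      _ ≤ x * Real.cosh t := by
          exact mul_le_mul_of_nonneg_left hcosh hx.le
  have hbound : Real.exp (-x * Real.cosh t) * Real.cosh (μ * t) ≤ Real.exp (-1 * t) := by
    have hc : Real.cosh (μ * t) ≤ Real.exp (|μ| * t) := by
      calc Real.cosh (μ * t) ≤ Real.exp |μ * t| := cosh_le_exp_abs _
        _ = Real.exp (|μ| * t) := by rw [abs_mul, abs_of_nonneg ht0]
    calc Real.exp (-x * Real.cosh t) * Real.cosh (μ * t)
        ≤ Real.exp (-x * Real.cosh t) * Real.exp (|μ| * t) := by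
          exact mul_le_mul_of_nonneg_left hc (Real.exp_pos _).le
      _ = Real.exp (|μ| * t - x * Real.cosh t) := by rw [← Real.exp_add]; ring_nf
      _ ≤ Real.exp (-1 * t) := by
          apply Real.exp_le_exp.2
          nlinarith
  have hpos : 0 < Real.exp (-x * Real.cosh t) * Real.cosh (μ * t) :=
    mul_pos (Real.exp_pos _) (Real.cosh_pos _)
  rw [Real.norm_of_nonneg hpos.le, Real.norm_of_nonneg (Real.exp_pos _).le, one_mul]
  exact hbound

lemma besselK_pos (μ x : ℝ) (hx : 0 < x) : 0 < besselK μ x := by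
  rw [besselK]
  rw [setIntegral_pos_iff_support_of_nonneg_ae]
  · have hsupp : Function.support (fun t => Real.exp (-x * Real.cosh t) * Real.cosh (μ * t)) = univ := by
      ext t
      simp only [Function.mem_support, mem_univ, iff_true]
      exact (mul_pos (Real.exp_pos _) (Real.cosh_pos _)).ne'
    rw [hsupp, univ_inter, Real.volume_Ioi]
    exact ENNReal.zero_lt_top
  · exact ae_of_all _ fun t => (mul_pos (Real.exp_pos _) (Real.cosh_pos _)).le
  · exact kf_integrable μ x hx

lemma cosh_sq_le (a t : ℝ) : Real.cosh a ^ 2 ≤ Real.cosh (a - t) * Real.cosh (a + t) := by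
  rw [Real.cosh_sub, Real.cosh_add]
  nlinarith [Real.cosh_sq_sub_sinh_sq a, Real.cosh_sq_sub_sinh_sq t, sq_nonneg (Real.sinh t),
    sq_nonneg (Real.sinh a * Real.sinh t)]

lemma besselK_cs (ν x : ℝ) (hx : 0 < x) :
    besselK ν x ^ 2 ≤ besselK (ν - 1) x * besselK (ν + 1) x := by
  set fm : ℝ → ℝ := fun t => Real.exp (-x * Real.cosh t) * Real.cosh ((ν - 1) * t) with hfm
  set fp : ℝ → ℝ := fun t => Real.exp (-x * Real.cosh t) * Real.cosh ((ν + 1) * t) with hfp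
  set f : ℝ → ℝ := fun t => Real.exp (-x * Real.cosh t) * Real.cosh (ν * t) with hf
  set u : ℝ → ℝ := fun t => Real.sqrt (fm t) with hu
  set v : ℝ → ℝ := fun t => Real.sqrt (fp t) with hv
  have hfm0 : ∀ t, 0 ≤ fm t := fun t => (mul_pos (Real.exp_pos _) (Real.cosh_pos _)).le
  have hfp0 : ∀ t, 0 ≤ fp t := fun t => (mul_pos (Real.exp_pos _) (Real.cosh_pos _)).le
  have hf0 : ∀ t, 0 ≤ f t := fun t => (mul_pos (Real.exp_pos _) (Real.cosh_pos _)).le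
  have hu_sq : ∀ t, u t ^ 2 = fm t := fun t => Real.sq_sqrt (hfm0 t)
  have hv_sq : ∀ t, v t ^ 2 = fp t := fun t => Real.sq_sqrt (hfp0 t)
  have hu_cont : Continuous u := Real.continuous_sqrt.comp (kf_cont (ν - 1) x)
  have hv_cont : Continuous v := Real.continuous_sqrt.comp (kf_cont (ν + 1) x)
  have hfuv : ∀ t, f t ≤ u t * v t := by
    intro t
    have h1 : u t * v t = Real.sqrt (fm t * fp t) := (Real.sqrt_mul (hfm0 t) _).symm
    rw [h1]
    apply Real.le_sqrt_of_sq_le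
    have key : Real.cosh (ν * t) ^ 2 ≤ Real.cosh ((ν - 1) * t) * Real.cosh ((ν + 1) * t) := by
      have h2 := cosh_sq_le (ν * t) t
      rw [show (ν * t - t) = (ν - 1) * t by ring, show (ν * t + t) = (ν + 1) * t by ring] at h2
      exact h2
    have h3 := mul_le_mul_of_nonneg_left key (sq_nonneg (Real.exp (-x * Real.cosh t)))
    simp only [hf, hfm, hfp]
    nlinarith [h3]
  have hum2 : Integrable (fun t => u t ^ 2) (volume.restrict (Ioi (0:ℝ))) := by
    refine (kf_integrable (ν - 1) x hx).congr ?_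
    exact ae_of_all _ fun t => (hu_sq t).symm
  have hvm2 : Integrable (fun t => v t ^ 2) (volume.restrict (Ioi (0:ℝ))) := by
    refine (kf_integrable (ν + 1) x hx).congr ?_
    exact ae_of_all _ fun t => (hv_sq t).symm
  have hum : MemLp u 2 (volume.restrict (Ioi (0:ℝ))) :=
    (memLp_two_iff_integrable_sq hu_cont.aestronglyMeasurable).2 hum2
  have hvm : MemLp v 2 (volume.restrict (Ioi (0:ℝ))) :=
    (memLp_two_iff_integrable_sq hv_cont.aestronglyMeasurable).2 hvm2
  have huv_int : Integrable (fun t => u t * v t) (volume.restrict (Ioi (0:ℝ))) := by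
    apply Integrable.mono' (g := fun t => (fm t + fp t) / 2)
      (((kf_integrable (ν - 1) x hx).add (kf_integrable (ν + 1) x hx)).div_const 2)
      (hu_cont.mul hv_cont).aestronglyMeasurable
    refine ae_of_all _ fun t => ?_
    show ‖u t * v t‖ ≤ _
    rw [Real.norm_of_nonneg (show 0 ≤ u t * v t from mul_nonneg (Real.sqrt_nonneg _) (Real.sqrt_nonneg _))]
    nlinarith [sq_nonneg (u t - v t), hu_sq t, hv_sq t]
  have step1 : besselK ν x ≤ ∫ t in Ioi (0:ℝ), u t * v t :=
    integral_mono (kf_integrable ν x hx) huv_int hfuv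
  have hpq : (2:ℝ).HolderConjugate 2 := Real.HolderConjugate.two_two
  have hum' : MemLp u (ENNReal.ofReal 2) (volume.restrict (Ioi (0:ℝ))) := by
    rw [show ENNReal.ofReal 2 = 2 by simp]; exact hum
  have hvm' : MemLp v (ENNReal.ofReal 2) (volume.restrict (Ioi (0:ℝ))) := by
    rw [show ENNReal.ofReal 2 = 2 by simp]; exact hvm
  have step2 := integral_mul_le_Lp_mul_Lq_of_nonneg hpq
    (ae_of_all _ fun t => Real.sqrt_nonneg (fm t)) (ae_of_all _ fun t => Real.sqrt_nonneg (fp t))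
    hum' hvm'
  have e1 : (∫ t in Ioi (0:ℝ), u t ^ (2:ℝ)) = besselK (ν - 1) x := by
    rw [besselK]
    apply integral_congr_ae
    refine ae_of_all _ fun t => ?_
    show u t ^ (2:ℝ) = fm t
    rw [show (2:ℝ) = ((2:ℕ):ℝ) by norm_num, Real.rpow_natCast, hu_sq t]
  have e2 : (∫ t in Ioi (0:ℝ), v t ^ (2:ℝ)) = besselK (ν + 1) x := by
    rw [besselK]
    apply integral_congr_ae
    refine ae_of_all _ fun t => ?_
    show v t ^ (2:ℝ) = fp t
    rw [show (2:ℝ) = ((2:ℕ):ℝ) by norm_num, Real.rpow_natCast, hv_sq t]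
  rw [e1, e2] at step2
  have step3 : besselK ν x ≤ besselK (ν - 1) x ^ (1/2:ℝ) * besselK (ν + 1) x ^ (1/2:ℝ) :=
    step1.trans step2
  have hKm := besselK_pos (ν - 1) x hx
  have hKp := besselK_pos (ν + 1) x hx
  calc besselK ν x ^ 2
      ≤ (besselK (ν - 1) x ^ (1/2:ℝ) * besselK (ν + 1) x ^ (1/2:ℝ)) ^ 2 :=
        pow_le_pow_left₀ (besselK_pos ν x hx).le step3 2
    _ = besselK (ν - 1) x * besselK (ν + 1) x := by
        rw [mul_pow, ← Real.rpow_natCast (besselK (ν - 1) x ^ (1/2:ℝ)) 2,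
          ← Real.rpow_natCast (besselK (ν + 1) x ^ (1/2:ℝ)) 2,
          ← Real.rpow_mul hKm.le, ← Real.rpow_mul hKp.le]
        norm_num

lemma key_I {ν x : ℝ} (hν : 0 < ν) (hx : 0 < x) :
    ν * besselI ν x ^ 2 < (ν + 1) * (besselI (ν - 1) x * besselI (ν + 1) x) := by
  have hm1 : (-1:ℝ) < ν - 1 := by linarith
  have h0 : (-1:ℝ) < ν := by linarith
  have hp1 : (-1:ℝ) < ν + 1 := by linarith
  rw [sq, besselI_mul h0 h0 hx, besselI_mul hm1 hp1 hx, ← tsum_mul_left, ← tsum_mul_left]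
  exact Summable.tsum_lt_tsum (fun n => coeff_le hν hx n) (strict_one hν hx)
    ((summable_cauchy h0 h0 hx).mul_left ν) ((summable_cauchy hm1 hp1 hx).mul_left (ν + 1))

end Stmt16Aux

theorem stmt16 (ν x : ℝ) (hν : 0 < ν) (hx : 0 < x) :
    (besselI ν x * besselK ν x) ^ 2 -
        (besselI (ν - 1) x * besselK (ν - 1) x) * (besselI (ν + 1) x * besselK (ν + 1) x) <
      (besselI ν x * besselK ν x) ^ 2 / (ν + 1) := by
  have hm1 : (-1:ℝ) < ν - 1 := by linarith
  have h0 : (-1:ℝ) < ν := by linarith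
  have hp1 : (-1:ℝ) < ν + 1 := by linarith
  have hI := Stmt16Aux.key_I hν hx
  have hK := Stmt16Aux.besselK_cs ν x hx
  have hIm := Stmt16Aux.besselI_pos hm1 hx
  have hI0 := Stmt16Aux.besselI_pos h0 hx
  have hIp := Stmt16Aux.besselI_pos hp1 hx
  have hKm := Stmt16Aux.besselK_pos (ν - 1) x hx
  have hK0 := Stmt16Aux.besselK_pos ν x hx
  have hKp := Stmt16Aux.besselK_pos (ν + 1) x hx
  rw [lt_div_iff₀ (by linarith : (0:ℝ) < ν + 1)]
  have h1 : ν * (besselI ν x ^ 2 * besselK ν x ^ 2) ≤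
      ν * (besselI ν x ^ 2 * (besselK (ν - 1) x * besselK (ν + 1) x)) :=
    mul_le_mul_of_nonneg_left (mul_le_mul_of_nonneg_left hK (sq_nonneg _)) hν.le
  have h2 := mul_lt_mul_of_pos_right hI (mul_pos hKm hKp)
  nlinarith [h1, h2]
end
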